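/- arXiv:math/0311185 — 2 statements merged into one kernel-verified Lean document; each statement's English description precedes it below -/
import Mathlib

section
/- Every based matrix over an abelian group H is obtained from a primitive based matrix by a finite sequence of elementary extensions, and any two homologous primitive based matrices are isomorphic. Consequently, each based matrix is homologous to a primitive based matrix that is unique up to isomorphism. -/
/-!  Based skew-symmetric matrices over an abelian group `H`, after Turaev.
A based matrix is a triple `(G, s, b)` where `G` is a finite set, `s ∈ G`,
and `b : G × G → H` is skew-symmetric.  We realize the finite set `G` as a
finite set of natural numbers; the values of `b` outside `G` are irrelevant
(isomorphism, homology, fillings etc. only refer to values on `G`). -/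

/-- The data of a based matrix over `H`: a finite carrier `G ⊆ ℕ`, a base
point `s` and a pairing `b`. -/
structure PreBM (H : Type*) where
  /-- the underlying finite set -/
  G : Finset ℕ
  /-- the base point `s` -/
  s : ℕ
  /-- the pairing -/
  b : ℕ → ℕ → H

variable {H : Type*} [AddCommGroup H]

/-- `(G, s, b)` is a based matrix: `s ∈ G` and `b` is skew-symmetric on `G`
(with vanishing diagonal). -/
def IsBM (T : PreBM H) : Prop :=
  T.s ∈ T.G ∧ (∀ g ∈ T.G, ∀ h ∈ T.G, T.b g h = -T.b h g) ∧
    ∀ g ∈ T.G, T.b g g = 0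

/-- Isomorphism of based matrices: a bijection of the carriers preserving the
base point and the pairing. -/
def BMIso (T T' : PreBM H) : Prop :=
  ∃ f : ℕ → ℕ, Set.BijOn f (T.G : Set ℕ) (T'.G : Set ℕ) ∧ f T.s = T'.s ∧
    ∀ g ∈ T.G, ∀ h ∈ T.G, T'.b (f g) (f h) = T.b g h

/-- `g` is an annihilating element of `T`. -/
def Annihilating (T : PreBM H) (g : ℕ) : Prop :=
  g ∈ T.G ∧ g ≠ T.s ∧ ∀ h ∈ T.G, T.b g h = 0

/-- `g` is a core element of `T`. -/
def CoreElt (T : PreBM H) (g : ℕ) : Prop :=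
  g ∈ T.G ∧ g ≠ T.s ∧ ∀ h ∈ T.G, T.b g h = T.b T.s h

/-- `g₁, g₂` is a complementary pair of elements of `T`. -/
def ComplPair (T : PreBM H) (g₁ g₂ : ℕ) : Prop :=
  g₁ ∈ T.G ∧ g₂ ∈ T.G ∧ g₁ ≠ T.s ∧ g₂ ≠ T.s ∧ g₁ ≠ g₂ ∧
    ∀ h ∈ T.G, T.b g₁ h + T.b g₂ h = T.b T.s h

/-- A based matrix is primitive if it has no annihilating elements, no core
elements and no complementary pairs. -/
def Primitive (T : PreBM H) : Prop :=
  (∀ g, ¬Annihilating T g) ∧ (∀ g, ¬CoreElt T g) ∧ ∀ g₁ g₂, ¬ComplPair T g₁ g₂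

/-- Elementary extension `M₁`: adjoin one annihilating element. -/
def IsExt1 (T T' : PreBM H) : Prop :=
  T'.s = T.s ∧ ∃ g, g ∉ T.G ∧ T'.G = insert g T.G ∧
    (∀ x ∈ T.G, ∀ y ∈ T.G, T'.b x y = T.b x y) ∧
    ∀ h ∈ T'.G, T'.b g h = 0

/-- Elementary extension `M₂`: adjoin one core element. -/
def IsExt2 (T T' : PreBM H) : Prop :=
  T'.s = T.s ∧ ∃ g, g ∉ T.G ∧ T'.G = insert g T.G ∧
    (∀ x ∈ T.G, ∀ y ∈ T.G, T'.b x y = T.b x y) ∧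
    ∀ h ∈ T'.G, T'.b g h = T'.b T'.s h

/-- Elementary extension `M₃`: adjoin a pair of complementary elements. -/
def IsExt3 (T T' : PreBM H) : Prop :=
  T'.s = T.s ∧ ∃ g₁ g₂, g₁ ∉ T.G ∧ g₂ ∉ T.G ∧ g₁ ≠ g₂ ∧
    T'.G = insert g₁ (insert g₂ T.G) ∧
    (∀ x ∈ T.G, ∀ y ∈ T.G, T'.b x y = T.b x y) ∧
    ∀ h ∈ T'.G, T'.b g₁ h + T'.b g₂ h = T'.b T'.s h

/-- One elementary extension between based matrices. -/
def StepExt (T T' : PreBM H) : Prop :=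
  IsBM T ∧ IsBM T' ∧ (IsExt1 T T' ∨ IsExt2 T T' ∨ IsExt3 T T')

/-- Two based matrices are homologous if they are related by a finite
sequence of elementary extensions, inverse extensions and isomorphisms. -/
def Homologous : PreBM H → PreBM H → Prop :=
  Relation.EqvGen fun T T' => StepExt T T' ∨ (IsBM T ∧ IsBM T' ∧ BMIso T T')
namespace BMRed

variable {H : Type*} [AddCommGroup H]

set_option linter.unusedSectionVars false

/-- one-step reduction: `T` reduces to `T'` iff `T` is an elementary extension of `T'`. -/
def Red (T T' : PreBM H) : Prop := StepExt T' T

lemma isoOfIdLike {T T' : PreBM H} (hG : T.G = T'.G) (hs : T.s = T'.s)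
    (hb : ∀ g ∈ T.G, ∀ h ∈ T.G, T'.b g h = T.b g h) : BMIso T T' := by
  refine ⟨id, ?_, hs, fun g hg h hh => hb g hg h hh⟩
  rw [← hG]; exact Set.bijOn_id _

lemma isoRefl (T : PreBM H) : BMIso T T := isoOfIdLike rfl rfl (fun _ _ _ _ => rfl)

lemma isoSymm {T T' : PreBM H} (hTs : T.s ∈ T.G) (h : BMIso T T') : BMIso T' T := by
  obtain ⟨f, hbij, hs, hb⟩ := h
  set g := Function.invFunOn f (T.G : Set ℕ) with hg
  have hinv : Set.InvOn g f (T.G : Set ℕ) (T'.G : Set ℕ) := hbij.invOn_invFunOn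
  have hbij' : Set.BijOn g (T'.G : Set ℕ) (T.G : Set ℕ) := Set.BijOn.symm hinv.symm hbij
  refine ⟨g, hbij', ?_, ?_⟩
  · rw [← hs]; exact hinv.1 (by exact_mod_cast hTs)
  · intro x hx y hy
    have hgx : g x ∈ T.G := by exact_mod_cast hbij'.mapsTo (by exact_mod_cast hx)
    have hgy : g y ∈ T.G := by exact_mod_cast hbij'.mapsTo (by exact_mod_cast hy)
    have := hb (g x) hgx (g y) hgy
    rw [hinv.2 (by exact_mod_cast hx), hinv.2 (by exact_mod_cast hy)] at this
    exact this.symm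

lemma isoTrans {T T' T'' : PreBM H} (h : BMIso T T') (h' : BMIso T' T'') : BMIso T T'' := by
  obtain ⟨f, hbij, hs, hb⟩ := h
  obtain ⟨f', hbij', hs', hb'⟩ := h'
  refine ⟨f' ∘ f, hbij'.comp hbij, by simp [hs, hs'], ?_⟩
  intro x hx y hy
  have hfx : f x ∈ T'.G := by exact_mod_cast hbij.mapsTo (by exact_mod_cast hx)
  have hfy : f y ∈ T'.G := by exact_mod_cast hbij.mapsTo (by exact_mod_cast hy)
  simp only [Function.comp_apply]
  rw [hb' _ hfx _ hfy, hb _ hx _ hy]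

end BMRed
namespace BMRed
variable {H : Type*} [AddCommGroup H]
set_option linter.unusedSectionVars false

/-- erase one element from the carrier -/
def EB (T : PreBM H) (g : ℕ) : PreBM H := ⟨T.G.erase g, T.s, T.b⟩

/-- erase two elements from the carrier -/
def EB2 (T : PreBM H) (g₁ g₂ : ℕ) : PreBM H := EB (EB T g₁) g₂

@[simp] lemma EB_G (T : PreBM H) (g : ℕ) : (EB T g).G = T.G.erase g := rfl
@[simp] lemma EB_s (T : PreBM H) (g : ℕ) : (EB T g).s = T.s := rfl
@[simp] lemma EB_b (T : PreBM H) (g : ℕ) : (EB T g).b = T.b := rfl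
@[simp] lemma EB2_G (T : PreBM H) (g₁ g₂ : ℕ) : (EB2 T g₁ g₂).G = (T.G.erase g₁).erase g₂ := rfl
@[simp] lemma EB2_s (T : PreBM H) (g₁ g₂ : ℕ) : (EB2 T g₁ g₂).s = T.s := rfl
@[simp] lemma EB2_b (T : PreBM H) (g₁ g₂ : ℕ) : (EB2 T g₁ g₂).b = T.b := rfl

lemma isBM_subset {T : PreBM H} (hT : IsBM T) {S : Finset ℕ} (hS : S ⊆ T.G)
    (hs : T.s ∈ S) : IsBM (⟨S, T.s, T.b⟩ : PreBM H) :=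
  ⟨hs, fun g hg h hh => hT.2.1 g (hS hg) h (hS hh), fun g hg => hT.2.2 g (hS hg)⟩

lemma isBM_EB {T : PreBM H} (hT : IsBM T) {g : ℕ} (hg : g ≠ T.s) : IsBM (EB T g) :=
  isBM_subset hT (Finset.erase_subset _ _) (Finset.mem_erase.mpr ⟨fun h => hg h.symm, hT.1⟩)

lemma isBM_EB2 {T : PreBM H} (hT : IsBM T) {g₁ g₂ : ℕ} (h₁ : g₁ ≠ T.s) (h₂ : g₂ ≠ T.s) :
    IsBM (EB2 T g₁ g₂) := isBM_EB (isBM_EB hT h₁) h₂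

lemma annMono {T : PreBM H} {g x : ℕ} (h : Annihilating T g) (hx : g ≠ x) :
    Annihilating (EB T x) g :=
  ⟨Finset.mem_erase.mpr ⟨hx, h.1⟩, h.2.1, fun y hy => h.2.2 y (Finset.mem_of_mem_erase hy)⟩

lemma coreMono {T : PreBM H} {g x : ℕ} (h : CoreElt T g) (hx : g ≠ x) :
    CoreElt (EB T x) g :=
  ⟨Finset.mem_erase.mpr ⟨hx, h.1⟩, h.2.1, fun y hy => h.2.2 y (Finset.mem_of_mem_erase hy)⟩

lemma pairMono {T : PreBM H} {g₁ g₂ x : ℕ} (h : ComplPair T g₁ g₂) (h₁ : g₁ ≠ x) (h₂ : g₂ ≠ x) :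
    ComplPair (EB T x) g₁ g₂ :=
  ⟨Finset.mem_erase.mpr ⟨h₁, h.1⟩, Finset.mem_erase.mpr ⟨h₂, h.2.1⟩, h.2.2.1, h.2.2.2.1,
    h.2.2.2.2.1, fun y hy => h.2.2.2.2.2 y (Finset.mem_of_mem_erase hy)⟩

lemma redA {T : PreBM H} (hT : IsBM T) {g : ℕ} (h : Annihilating T g) :
    Red T (EB T g) ∧ IsBM (EB T g) := by
  have hBM := isBM_EB hT h.2.1
  refine ⟨⟨hBM, hT, Or.inl ⟨rfl, g, ?_, ?_, fun _ _ _ _ => rfl, h.2.2⟩⟩, hBM⟩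
  · simp
  · simp [Finset.insert_erase h.1]

lemma redC {T : PreBM H} (hT : IsBM T) {g : ℕ} (h : CoreElt T g) :
    Red T (EB T g) ∧ IsBM (EB T g) := by
  have hBM := isBM_EB hT h.2.1
  refine ⟨⟨hBM, hT, Or.inr (Or.inl ⟨rfl, g, ?_, ?_, fun _ _ _ _ => rfl, h.2.2⟩)⟩, hBM⟩
  · simp
  · simp [Finset.insert_erase h.1]

lemma redP {T : PreBM H} (hT : IsBM T) {g₁ g₂ : ℕ} (h : ComplPair T g₁ g₂) :
    Red T (EB2 T g₁ g₂) ∧ IsBM (EB2 T g₁ g₂) := by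
  have hBM := isBM_EB2 hT h.2.2.1 h.2.2.2.1
  obtain ⟨hm₁, hm₂, hs₁, hs₂, hne, hsum⟩ := h
  refine ⟨⟨hBM, hT, Or.inr (Or.inr ⟨rfl, g₁, g₂, ?_, ?_, hne, ?_, fun _ _ _ _ => rfl, hsum⟩)⟩, hBM⟩
  · simp
  · simp [hne]
  · rw [EB2_G, Finset.insert_erase (Finset.mem_erase.mpr ⟨fun e => hne e.symm, hm₂⟩),
      Finset.insert_erase hm₁]

/-- any one-step reduction is, up to identity-like isomorphism, a canonical erasure -/
lemma redInv {T T₁ : PreBM H} (h : Red T T₁) :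
    (∃ g, Annihilating T g ∧ BMIso T₁ (EB T g)) ∨
    (∃ g, CoreElt T g ∧ BMIso T₁ (EB T g)) ∨
    (∃ g₁ g₂, ComplPair T g₁ g₂ ∧ BMIso T₁ (EB2 T g₁ g₂)) := by
  obtain ⟨hBM₁, hBM, hext⟩ := h
  rcases hext with ⟨hs, g, hgn, hG, hb, hlast⟩ | ⟨hs, g, hgn, hG, hb, hlast⟩ |
    ⟨hs, g₁, g₂, hg₁n, hg₂n, hne, hG, hb, hlast⟩
  · left
    have hgs : g ≠ T.s := fun e => hgn (e ▸ hs ▸ hBM₁.1)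
    have hGe : T₁.G = T.G.erase g := by rw [hG, Finset.erase_insert hgn]
    refine ⟨g, ⟨by simp [hG], hgs, hlast⟩, ?_⟩
    exact isoOfIdLike hGe hs.symm (fun x hx y hy => hb x hx y hy)
  · right; left
    have hgs : g ≠ T.s := fun e => hgn (e ▸ hs ▸ hBM₁.1)
    have hGe : T₁.G = T.G.erase g := by rw [hG, Finset.erase_insert hgn]
    refine ⟨g, ⟨by simp [hG], hgs, hlast⟩, ?_⟩
    exact isoOfIdLike hGe hs.symm (fun x hx y hy => hb x hx y hy)
  · right; right
    have hg₁s : g₁ ≠ T.s := fun e => hg₁n (e ▸ hs ▸ hBM₁.1)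
    have hg₂s : g₂ ≠ T.s := fun e => hg₂n (e ▸ hs ▸ hBM₁.1)
    have hg₁' : g₁ ∉ insert g₂ T₁.G := by simp [hne, hg₁n]
    have hGe : T₁.G = (T.G.erase g₁).erase g₂ := by
      rw [hG, Finset.erase_insert hg₁', Finset.erase_insert hg₂n]
    refine ⟨g₁, g₂, ⟨by simp [hG], by simp [hG], hg₁s, hg₂s, hne, hlast⟩, ?_⟩
    exact isoOfIdLike hGe hs.symm (fun x hx y hy => hb x hx y hy)

lemma cardRed {T T₁ : PreBM H} (h : Red T T₁) : T₁.G.card < T.G.card := by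
  obtain ⟨hBM₁, hBM, hext⟩ := h
  rcases hext with ⟨hs, g, hgn, hG, -⟩ | ⟨hs, g, hgn, hG, -⟩ |
    ⟨hs, g₁, g₂, hg₁n, hg₂n, hne, hG, -⟩
  · rw [hG, Finset.card_insert_of_notMem hgn]; omega
  · rw [hG, Finset.card_insert_of_notMem hgn]; omega
  · rw [hG, Finset.card_insert_of_notMem (by simp [hne, hg₁n]),
      Finset.card_insert_of_notMem hg₂n]; omega

lemma primNoRed {T : PreBM H} (hp : Primitive T) {T₁ : PreBM H} (h : Red T T₁) : False := by
  rcases redInv h with ⟨g, hg, -⟩ | ⟨g, hg, -⟩ | ⟨g₁, g₂, hg, -⟩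
  · exact hp.1 g hg
  · exact hp.2.1 g hg
  · exact hp.2.2 g₁ g₂ hg

lemma primIso {P Q : PreBM H} (hPs : P.s ∈ P.G) (h : BMIso P Q) (hp : Primitive P) : Primitive Q := by
  obtain ⟨f, hbij, hs, hb⟩ := h
  have surj : ∀ g ∈ Q.G, ∃ x ∈ P.G, f x = g := by
    intro g hg
    obtain ⟨x, hx, hfx⟩ := hbij.surjOn (by exact_mod_cast hg)
    exact ⟨x, by exact_mod_cast hx, hfx⟩
  refine ⟨?_, ?_, ?_⟩
  · rintro g ⟨hg, hgs, hz⟩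
    obtain ⟨x, hx, rfl⟩ := surj g hg
    have hxs : x ≠ P.s := fun e => hgs (by rw [e, hs])
    refine hp.1 x ⟨hx, hxs, fun y hy => ?_⟩
    rw [← hb x hx y hy]
    exact hz _ (by exact_mod_cast hbij.mapsTo (by exact_mod_cast hy))
  · rintro g ⟨hg, hgs, hz⟩
    obtain ⟨x, hx, rfl⟩ := surj g hg
    have hxs : x ≠ P.s := fun e => hgs (by rw [e, hs])
    refine hp.2.1 x ⟨hx, hxs, fun y hy => ?_⟩
    have hfy : f y ∈ Q.G := by exact_mod_cast hbij.mapsTo (by exact_mod_cast hy)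
    rw [← hb x hx y hy, hz _ hfy, ← hs, hb P.s hPs y hy]
  · rintro g₁ g₂ ⟨hg₁, hg₂, hg₁s, hg₂s, hne, hz⟩
    obtain ⟨x₁, hx₁, rfl⟩ := surj g₁ hg₁
    obtain ⟨x₂, hx₂, rfl⟩ := surj g₂ hg₂
    have hx₁s : x₁ ≠ P.s := fun e => hg₁s (by rw [e, hs])
    have hx₂s : x₂ ≠ P.s := fun e => hg₂s (by rw [e, hs])
    have hxne : x₁ ≠ x₂ := fun e => hne (by rw [e])
    refine hp.2.2 x₁ x₂ ⟨hx₁, hx₂, hx₁s, hx₂s, hxne, fun y hy => ?_⟩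
    have hfy : f y ∈ Q.G := by exact_mod_cast hbij.mapsTo (by exact_mod_cast hy)
    rw [← hb x₁ hx₁ y hy, ← hb x₂ hx₂ y hy, hz _ hfy, ← hs, hb P.s hPs y hy]

end BMRed
namespace BMRed
variable {H : Type*} [AddCommGroup H]
set_option linter.unusedSectionVars false

lemma extSub {A₁ A : PreBM H} (h : IsExt1 A₁ A ∨ IsExt2 A₁ A ∨ IsExt3 A₁ A) :
    A₁.G ⊆ A.G ∧ A.s = A₁.s ∧ ∀ x ∈ A₁.G, ∀ y ∈ A₁.G, A.b x y = A₁.b x y := by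
  rcases h with ⟨hs, g, hgn, hG, hb, -⟩ | ⟨hs, g, hgn, hG, hb, -⟩ |
    ⟨hs, g₁, g₂, h₁, h₂, hne, hG, hb, -⟩
  · exact ⟨by rw [hG]; exact Finset.subset_insert _ _, hs, hb⟩
  · exact ⟨by rw [hG]; exact Finset.subset_insert _ _, hs, hb⟩
  · refine ⟨by rw [hG]; intro x hx; simp [hx], hs, hb⟩

lemma isoTransportStep {A B A₁ : PreBM H} (hiso : BMIso A B) (hB : IsBM B)
    (hred : Red A A₁) : ∃ B₁, Red B B₁ ∧ BMIso A₁ B₁ := by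
  obtain ⟨f, hbij, hs, hb⟩ := hiso
  obtain ⟨hBM₁, hBM, hext⟩ := hred
  obtain ⟨hsub, hsA, hbA⟩ := extSub hext
  set B₁ : PreBM H := ⟨A₁.G.image f, B.s, B.b⟩ with hB₁
  have hsubset : (A₁.G.image f : Finset ℕ) ⊆ B.G := by
    intro y hy
    obtain ⟨x, hx, rfl⟩ := Finset.mem_image.mp hy
    exact_mod_cast hbij.mapsTo (by exact_mod_cast hsub hx)
  have hsmem : B.s ∈ A₁.G.image f := by
    refine Finset.mem_image.mpr ⟨A₁.s, hBM₁.1, ?_⟩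
    rw [← hsA, hs]
  have hBMB₁ : IsBM B₁ := isBM_subset hB hsubset hsmem
  have hinj : Set.InjOn f (A.G : Set ℕ) := hbij.injOn
  have himg : ((A₁.G.image f : Finset ℕ) : Set ℕ) = f '' (A₁.G : Set ℕ) := Finset.coe_image
  have hbijon : Set.BijOn f (A₁.G : Set ℕ) ((A₁.G.image f : Finset ℕ) : Set ℕ) := by
    rw [himg]
    exact (hinj.mono (by exact_mod_cast hsub)).bijOn_image
  have hmemA : ∀ x ∈ A₁.G, x ∈ A.G := fun x hx => hsub hx
  have hiso₁ : BMIso A₁ B₁ := by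
    refine ⟨f, hbijon, by rw [← hsA, hs], fun x hx y hy => ?_⟩
    show B.b (f x) (f y) = A₁.b x y
    rw [hb x (hmemA x hx) y (hmemA y hy), hbA x hx y hy]
  refine ⟨B₁, ⟨hBMB₁, hB, ?_⟩, hiso₁⟩
  have hBGimg : (B.G : Set ℕ) = f '' (A.G : Set ℕ) := hbij.image_eq.symm
  have hmemBG : ∀ x ∈ A.G, f x ∈ B.G := fun x hx =>
    by exact_mod_cast hbij.mapsTo (by exact_mod_cast hx)
  have hsurj : ∀ y ∈ B.G, ∃ x ∈ A.G, f x = y := by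
    intro y hy
    obtain ⟨x, hx, rfl⟩ := hbij.surjOn (by exact_mod_cast hy)
    exact ⟨x, by exact_mod_cast hx, rfl⟩
  rcases hext with ⟨hsE, g, hgn, hG, hbE, hlast⟩ | ⟨hsE, g, hgn, hG, hbE, hlast⟩ |
    ⟨hsE, g₁, g₂, h₁, h₂, hne, hG, hbE, hlast⟩
  · left
    have hgA : g ∈ A.G := by rw [hG]; simp
    refine ⟨rfl, f g, ?_, ?_, fun x _ y _ => rfl, ?_⟩
    · intro hmem
      obtain ⟨x, hx, hfx⟩ := Finset.mem_image.mp hmem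
      exact hgn (hinj (by exact_mod_cast hmemA x hx) (by exact_mod_cast hgA) hfx ▸ hx)
    · apply Finset.coe_injective
      rw [Finset.coe_insert, himg, hBGimg, hG, Finset.coe_insert, Set.image_insert_eq]
    · intro y hy
      obtain ⟨x, hx, rfl⟩ := hsurj y hy
      show B.b (f g) (f x) = 0
      rw [hb g hgA x hx]
      exact hlast x hx
  · right; left
    have hgA : g ∈ A.G := by rw [hG]; simp
    refine ⟨rfl, f g, ?_, ?_, fun x _ y _ => rfl, ?_⟩
    · intro hmem
      obtain ⟨x, hx, hfx⟩ := Finset.mem_image.mp hmem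
      exact hgn (hinj (by exact_mod_cast hmemA x hx) (by exact_mod_cast hgA) hfx ▸ hx)
    · apply Finset.coe_injective
      rw [Finset.coe_insert, himg, hBGimg, hG, Finset.coe_insert, Set.image_insert_eq]
    · intro y hy
      obtain ⟨x, hx, rfl⟩ := hsurj y hy
      show B.b (f g) (f x) = B.b B.s (f x)
      rw [hb g hgA x hx, ← hs, hb A.s hBM.1 x hx]
      exact hlast x hx
  · right; right
    have hg₁A : g₁ ∈ A.G := by rw [hG]; simp
    have hg₂A : g₂ ∈ A.G := by rw [hG]; simp
    refine ⟨rfl, f g₁, f g₂, ?_, ?_, ?_, ?_, fun x _ y _ => rfl, ?_⟩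
    · intro hmem
      obtain ⟨x, hx, hfx⟩ := Finset.mem_image.mp hmem
      exact h₁ (hinj (by exact_mod_cast hmemA x hx) (by exact_mod_cast hg₁A) hfx ▸ hx)
    · intro hmem
      obtain ⟨x, hx, hfx⟩ := Finset.mem_image.mp hmem
      exact h₂ (hinj (by exact_mod_cast hmemA x hx) (by exact_mod_cast hg₂A) hfx ▸ hx)
    · intro e
      exact hne (hinj (by exact_mod_cast hg₁A) (by exact_mod_cast hg₂A) e)
    · apply Finset.coe_injective
      rw [Finset.coe_insert, Finset.coe_insert, himg, hBGimg, hG]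
      rw [Finset.coe_insert, Finset.coe_insert, Set.image_insert_eq, Set.image_insert_eq]
    · intro y hy
      obtain ⟨x, hx, rfl⟩ := hsurj y hy
      show B.b (f g₁) (f x) + B.b (f g₂) (f x) = B.b B.s (f x)
      rw [hb g₁ hg₁A x hx, hb g₂ hg₂A x hx, ← hs, hb A.s hBM.1 x hx]
      exact hlast x hx

lemma rtcIsBM {T P : PreBM H} (hT : IsBM T) (h : Relation.ReflTransGen (Red (H := H)) T P) :
    IsBM P := by
  induction h with
  | refl => exact hT
  | tail _ hstep ih => exact hstep.1

lemma isoTransportRTC {A B P : PreBM H} (hiso : BMIso A B) (hB : IsBM B)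
    (h : Relation.ReflTransGen (Red (H := H)) A P) :
    ∃ Q, Relation.ReflTransGen (Red (H := H)) B Q ∧ BMIso P Q := by
  induction h using Relation.ReflTransGen.head_induction_on generalizing B with
  | refl => exact ⟨B, Relation.ReflTransGen.refl, hiso⟩
  | head hstep _ ih =>
    obtain ⟨B₁, hredB, hisoB₁⟩ := isoTransportStep hiso hB hstep
    obtain ⟨Q, hrtc, hisoQ⟩ := ih hisoB₁ hredB.1
    exact ⟨Q, Relation.ReflTransGen.head hredB hrtc, hisoQ⟩

end BMRed
namespace BMRed
variable {H : Type*} [AddCommGroup H]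
set_option linter.unusedSectionVars false

/-- swap isomorphism: if rows of `a` and `a'` agree, the two erasures are isomorphic. -/
lemma swapIso (T : PreBM H) (hT : IsBM T) (a a' c : ℕ) (S S' : Finset ℕ)
    (ha : a ∈ T.G) (ha' : a' ∈ T.G) (haa' : a ≠ a') (hac : a ≠ c) (ha'c : a' ≠ c)
    (ha's : a' ≠ T.s)
    (hS : ∀ x, x ∈ S ↔ x ∈ T.G ∧ x ≠ a ∧ x ≠ c)
    (hS' : ∀ x, x ∈ S' ↔ x ∈ T.G ∧ x ≠ a' ∧ x ≠ c)
    (hrow : ∀ h ∈ T.G, T.b a h = T.b a' h) :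
    BMIso (⟨S, T.s, T.b⟩ : PreBM H) (⟨S', T.s, T.b⟩ : PreBM H) := by
  classical
  set f : ℕ → ℕ := fun x => if x = a' then a else x with hf
  have hfa' : f a' = a := by simp [hf]
  have hfother : ∀ x, x ≠ a' → f x = x := fun x hx => by simp [hf, hx]
  have hcol : ∀ h ∈ T.G, T.b h a = T.b h a' := by
    intro h hh
    rw [hT.2.1 h hh a ha, hT.2.1 h hh a' ha', hrow h hh]
  have hmaps : ∀ x ∈ S, f x ∈ S' := by
    intro x hx
    rcases (hS x).mp hx with ⟨hxG, hxa, hxc⟩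
    by_cases hxa' : x = a'
    · subst hxa'; rw [hfa']; exact (hS' a).mpr ⟨ha, haa', hac⟩
    · rw [hfother x hxa']; exact (hS' x).mpr ⟨hxG, hxa', hxc⟩
  refine ⟨f, ⟨?_, ?_, ?_⟩, hfother _ (fun e => ha's e.symm), ?_⟩
  · intro x hx
    exact_mod_cast hmaps x (by exact_mod_cast hx)
  · intro x hx y hy hxy
    simp only [Finset.mem_coe] at hx hy
    rcases (hS x).mp hx with ⟨hxG, hxa, hxc⟩
    rcases (hS y).mp hy with ⟨hyG, hya, hyc⟩
    by_cases hx' : x = a' <;> by_cases hy' : y = a'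
    · rw [hx', hy']
    · rw [hx', hfa', hfother y hy'] at hxy; exact absurd hxy.symm hya
    · rw [hy', hfa', hfother x hx'] at hxy; exact absurd hxy hxa
    · rwa [hfother x hx', hfother y hy'] at hxy
  · intro y hy
    simp only [Finset.mem_coe] at hy
    rcases (hS' y).mp hy with ⟨hyG, hya', hyc⟩
    by_cases hya : y = a
    · subst hya
      exact ⟨a', by exact_mod_cast (hS a').mpr ⟨ha', fun e => haa' e.symm, ha'c⟩, hfa'⟩
    · exact ⟨y, by exact_mod_cast (hS y).mpr ⟨hyG, hya, hyc⟩, hfother y hya'⟩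
  · intro x hx y hy
    rcases (hS x).mp hx with ⟨hxG, hxa, hxc⟩
    rcases (hS y).mp hy with ⟨hyG, hya, hyc⟩
    show T.b (f x) (f y) = T.b x y
    by_cases hx' : x = a' <;> by_cases hy' : y = a'
    · rw [hx', hy', hfa', hT.2.2 a ha, hT.2.2 a' ha']
    · rw [hx', hfa', hfother y hy', hrow y hyG]
    · rw [hy', hfa', hfother x hx', hcol x hxG]
    · rw [hfother x hx', hfother y hy']

lemma corePartner {T : PreBM H} {g₁ g₂ : ℕ} (hA : Annihilating T g₁)
    (hP : ComplPair T g₁ g₂) : CoreElt (EB T g₁) g₂ := by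
  refine ⟨Finset.mem_erase.mpr ⟨fun e => hP.2.2.2.2.1 e.symm, hP.2.1⟩, hP.2.2.2.1, ?_⟩
  intro h hh
  have hhG : h ∈ T.G := Finset.mem_of_mem_erase hh
  have h1 := hP.2.2.2.2.2 h hhG
  have h2 := hA.2.2 h hhG
  show T.b g₂ h = T.b T.s h
  rw [h2, zero_add] at h1
  exact h1

lemma annPartner {T : PreBM H} {g₁ g₂ : ℕ} (hC : CoreElt T g₁)
    (hP : ComplPair T g₁ g₂) : Annihilating (EB T g₁) g₂ := by
  refine ⟨Finset.mem_erase.mpr ⟨fun e => hP.2.2.2.2.1 e.symm, hP.2.1⟩, hP.2.2.2.1, ?_⟩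
  intro h hh
  have hhG : h ∈ T.G := Finset.mem_of_mem_erase hh
  have h1 := hP.2.2.2.2.2 h hhG
  have h2 := hC.2.2 h hhG
  show T.b g₂ h = 0
  rw [h2] at h1
  exact (add_eq_left).mp h1

end BMRed
namespace BMRed
variable {H : Type*} [AddCommGroup H]
set_option linter.unusedSectionVars false
set_option maxHeartbeats 1000000

/-- confluence data for two reducts -/
def Conf (X₁ X₂ : PreBM H) : Prop :=
  ∃ U₁ U₂, IsBM U₁ ∧ IsBM U₂ ∧ Relation.ReflTransGen Red X₁ U₁ ∧
    Relation.ReflTransGen Red X₂ U₂ ∧ BMIso U₁ U₂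

lemma confSwap {X₁ X₂ : PreBM H} (h : Conf X₁ X₂) : Conf X₂ X₁ := by
  obtain ⟨U₁, U₂, hB₁, hB₂, h₁, h₂, hiso⟩ := h
  exact ⟨U₂, U₁, hB₂, hB₁, h₂, h₁, isoSymm hB₁.1 hiso⟩

lemma pairSymm {T : PreBM H} {g₁ g₂ : ℕ} (h : ComplPair T g₁ g₂) : ComplPair T g₂ g₁ :=
  ⟨h.2.1, h.1, h.2.2.2.1, h.2.2.1, Ne.symm h.2.2.2.2.1,
    fun y hy => by rw [add_comm]; exact h.2.2.2.2.2 y hy⟩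

/-- identity iso between reducts with the same s and b and provably equal carriers -/
lemma idIso {S S' : Finset ℕ} {s : ℕ} {b : ℕ → ℕ → H} (hG : S = S') :
    BMIso (⟨S, s, b⟩ : PreBM H) (⟨S', s, b⟩ : PreBM H) :=
  isoOfIdLike hG rfl (fun _ _ _ _ => rfl)

lemma confAA {T : PreBM H} (hT : IsBM T) {g g' : ℕ}
    (h : Annihilating T g) (h' : Annihilating T g') : Conf (EB T g) (EB T g') := by
  by_cases e : g = g'
  · subst e
    exact ⟨_, _, (redA hT h).2, (redA hT h).2, .refl, .refl, isoRefl _⟩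
  · have s1 := redA (redA hT h).2 (annMono h' (Ne.symm e))
    have s2 := redA (redA hT h').2 (annMono h e)
    refine ⟨_, _, s1.2, s2.2, .single s1.1, .single s2.1, idIso ?_⟩
    ext x; simp only [EB_G, EB2_G, Finset.mem_erase]; try tauto

lemma confCC {T : PreBM H} (hT : IsBM T) {g g' : ℕ}
    (h : CoreElt T g) (h' : CoreElt T g') : Conf (EB T g) (EB T g') := by
  by_cases e : g = g'
  · subst e
    exact ⟨_, _, (redC hT h).2, (redC hT h).2, .refl, .refl, isoRefl _⟩
  · have s1 := redC (redC hT h).2 (coreMono h' (Ne.symm e))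
    have s2 := redC (redC hT h').2 (coreMono h e)
    refine ⟨_, _, s1.2, s2.2, .single s1.1, .single s2.1, idIso ?_⟩
    ext x; simp only [EB_G, EB2_G, Finset.mem_erase]; try tauto

lemma confAC {T : PreBM H} (hT : IsBM T) {g g' : ℕ}
    (h : Annihilating T g) (h' : CoreElt T g') : Conf (EB T g) (EB T g') := by
  by_cases e : g = g'
  · subst e
    exact ⟨_, _, (redA hT h).2, (redA hT h).2, .refl, .refl, isoRefl _⟩
  · have s1 := redC (redA hT h).2 (coreMono h' (Ne.symm e))
    have s2 := redA (redC hT h').2 (annMono h e)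
    refine ⟨_, _, s1.2, s2.2, .single s1.1, .single s2.1, idIso ?_⟩
    ext x; simp only [EB_G, EB2_G, Finset.mem_erase]; try tauto

lemma confAP {T : PreBM H} (hT : IsBM T) {g g₁ g₂ : ℕ}
    (h : Annihilating T g) (hP : ComplPair T g₁ g₂) : Conf (EB T g) (EB2 T g₁ g₂) := by
  by_cases e1 : g = g₁
  · subst e1
    have s1 := redC (redA hT h).2 (corePartner h hP)
    exact ⟨_, _, s1.2, s1.2, .single s1.1, .refl, isoRefl _⟩
  · by_cases e2 : g = g₂
    · subst e2
      have s1 := redC (redA hT h).2 (corePartner h (pairSymm hP))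
      refine ⟨_, _, s1.2, (redP hT hP).2, .single s1.1, .refl, idIso ?_⟩
      ext x; simp only [EB_G, EB2_G, Finset.mem_erase]; try tauto
    · have s1 := redP (redA hT h).2 (pairMono hP (Ne.symm e1) (Ne.symm e2))
      have s2 := redA (redP hT hP).2 (annMono (annMono h e1) e2)
      refine ⟨_, _, s1.2, s2.2, .single s1.1, .single s2.1, idIso ?_⟩
      ext x; simp only [EB_G, EB2_G, Finset.mem_erase]; try tauto

lemma confCP {T : PreBM H} (hT : IsBM T) {g g₁ g₂ : ℕ}
    (h : CoreElt T g) (hP : ComplPair T g₁ g₂) : Conf (EB T g) (EB2 T g₁ g₂) := by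
  by_cases e1 : g = g₁
  · subst e1
    have s1 := redA (redC hT h).2 (annPartner h hP)
    exact ⟨_, _, s1.2, s1.2, .single s1.1, .refl, isoRefl _⟩
  · by_cases e2 : g = g₂
    · subst e2
      have s1 := redA (redC hT h).2 (annPartner h (pairSymm hP))
      refine ⟨_, _, s1.2, (redP hT hP).2, .single s1.1, .refl, idIso ?_⟩
      ext x; simp only [EB_G, EB2_G, Finset.mem_erase]; try tauto
    · have s1 := redP (redC hT h).2 (pairMono hP (Ne.symm e1) (Ne.symm e2))
      have s2 := redC (redP hT hP).2 (coreMono (coreMono h e1) e2)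
      refine ⟨_, _, s1.2, s2.2, .single s1.1, .single s2.1, idIso ?_⟩
      ext x; simp only [EB_G, EB2_G, Finset.mem_erase]; try tauto

lemma confPP {T : PreBM H} (hT : IsBM T) {g₁ g₂ g₃ g₄ : ℕ}
    (hP : ComplPair T g₁ g₂) (hQ : ComplPair T g₃ g₄) :
    Conf (EB2 T g₁ g₂) (EB2 T g₃ g₄) := by
  obtain ⟨m₁, m₂, s₁, s₂, ne₁₂, sum₁⟩ := hP
  obtain ⟨m₃, m₄, s₃, s₄, ne₃₄, sum₂⟩ := hQ
  have hBP := (redP hT ⟨m₁, m₂, s₁, s₂, ne₁₂, sum₁⟩).2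
  have hBQ := (redP hT ⟨m₃, m₄, s₃, s₄, ne₃₄, sum₂⟩).2
  by_cases e13 : g₁ = g₃
  · subst e13
    by_cases e24 : g₂ = g₄
    · subst e24; exact ⟨_, _, hBP, hBP, .refl, .refl, isoRefl _⟩
    · -- shared c = g₁, a = g₂, a' = g₄
      have hrow : ∀ h ∈ T.G, T.b g₂ h = T.b g₄ h := by
        intro y hy
        exact add_left_cancel ((sum₁ y hy).trans (sum₂ y hy).symm)
      refine ⟨_, _, hBP, hBQ, .refl, .refl,
        swapIso T hT g₂ g₄ g₁ _ _ m₂ m₄ e24 (Ne.symm ne₁₂) (Ne.symm ne₃₄) s₄ ?_ ?_ hrow⟩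
      · intro x; simp only [EB_G, EB2_G, Finset.mem_erase]; try tauto
      · intro x; simp only [EB_G, EB2_G, Finset.mem_erase]; try tauto
  · by_cases e14 : g₁ = g₄
    · subst e14
      by_cases e23 : g₂ = g₃
      · subst e23
        refine ⟨_, _, hBP, hBQ, .refl, .refl, idIso ?_⟩
        ext x; simp only [EB_G, EB2_G, Finset.mem_erase]; try tauto
      · -- shared c = g₁ (= g₄), a = g₂, a' = g₃
        have hrow : ∀ h ∈ T.G, T.b g₂ h = T.b g₃ h := by
          intro y hy
          have h2 := sum₂ y hy
          rw [add_comm] at h2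
          exact add_left_cancel ((sum₁ y hy).trans h2.symm)
        refine ⟨_, _, hBP, hBQ, .refl, .refl, isoTrans
          (swapIso T hT g₂ g₃ g₁ _ ((T.G.erase g₁).erase g₃) m₂ m₃ e23 (Ne.symm ne₁₂)
            ne₃₄ s₃ ?_ ?_ hrow) (idIso ?_)⟩
        · intro x; simp only [EB_G, EB2_G, Finset.mem_erase]; try tauto
        · intro x; simp only [EB_G, EB2_G, Finset.mem_erase]; try tauto
        · ext x; simp only [EB_G, EB2_G, Finset.mem_erase]; try tauto
    · by_cases e23 : g₂ = g₃
      · subst e23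
        -- shared c = g₂, a = g₁, a' = g₄  (note g₂ ≠ g₄ since g₃ ≠ g₄)
        have hrow : ∀ h ∈ T.G, T.b g₁ h = T.b g₄ h := by
          intro y hy
          have h1 := sum₁ y hy
          rw [add_comm] at h1
          exact add_left_cancel (h1.trans (sum₂ y hy).symm)
        refine ⟨_, _, hBP, hBQ, .refl, .refl, isoTrans (isoTrans (idIso ?_)
          (swapIso T hT g₁ g₄ g₂ ((T.G.erase g₂).erase g₁) ((T.G.erase g₂).erase g₄)
            m₁ m₄ e14 ne₁₂ (Ne.symm ne₃₄) s₄ ?_ ?_ hrow)) (idIso ?_)⟩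
        · ext x; simp only [EB_G, EB2_G, Finset.mem_erase]; try tauto
        · intro x; simp only [EB_G, EB2_G, Finset.mem_erase]; try tauto
        · intro x; simp only [EB_G, EB2_G, Finset.mem_erase]; try tauto
        · ext x; simp only [EB_G, EB2_G, Finset.mem_erase]; try tauto
      · by_cases e24 : g₂ = g₄
        · subst e24
          -- shared c = g₂, a = g₁, a' = g₃
          have hrow : ∀ h ∈ T.G, T.b g₁ h = T.b g₃ h := by
            intro y hy
            have h1 := sum₁ y hy
            have h2 := sum₂ y hy
            rw [add_comm] at h1 h2
            exact add_left_cancel (h1.trans h2.symm)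
          refine ⟨_, _, hBP, hBQ, .refl, .refl, isoTrans (isoTrans (idIso ?_)
            (swapIso T hT g₁ g₃ g₂ ((T.G.erase g₂).erase g₁) ((T.G.erase g₂).erase g₃)
              m₁ m₃ e13 ne₁₂ ne₃₄ s₃ ?_ ?_ hrow)) (idIso ?_)⟩
          · ext x; simp only [EB_G, EB2_G, Finset.mem_erase]; try tauto
          · intro x; simp only [EB_G, EB2_G, Finset.mem_erase]; try tauto
          · intro x; simp only [EB_G, EB2_G, Finset.mem_erase]; try tauto
          · ext x; simp only [EB_G, EB2_G, Finset.mem_erase]; try tauto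
        · -- disjoint
          have hP' := pairMono (pairMono (⟨m₁, m₂, s₁, s₂, ne₁₂, sum₁⟩ :
            ComplPair T g₁ g₂) e13 e23) e14 e24
          have hQ' := pairMono (pairMono (⟨m₃, m₄, s₃, s₄, ne₃₄, sum₂⟩ :
            ComplPair T g₃ g₄) (Ne.symm e13) (Ne.symm e14)) (Ne.symm e23) (Ne.symm e24)
          have s1 := redP hBP hQ'
          have s2 := redP hBQ hP'
          refine ⟨_, _, s1.2, s2.2, .single s1.1, .single s2.1, idIso ?_⟩
          ext x; simp only [EB_G, EB2_G, Finset.mem_erase]; try tauto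

end BMRed
namespace BMRed
variable {H : Type*} [AddCommGroup H]
set_option linter.unusedSectionVars false
set_option maxHeartbeats 1000000

lemma confUp {T T₁ C₁ T₂ C₂ : PreBM H} (h₁ : Red T T₁) (iso₁ : BMIso T₁ C₁)
    (h₂ : Red T T₂) (iso₂ : BMIso T₂ C₂) (h : Conf C₁ C₂) : Conf T₁ T₂ := by
  obtain ⟨V₁, V₂, hBV₁, hBV₂, r₁, r₂, iso⟩ := h
  obtain ⟨U₁, rt₁, i₁⟩ := isoTransportRTC (isoSymm h₁.1.1 iso₁) h₁.1 r₁
  obtain ⟨U₂, rt₂, i₂⟩ := isoTransportRTC (isoSymm h₂.1.1 iso₂) h₂.1 r₂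
  exact ⟨U₁, U₂, rtcIsBM h₁.1 rt₁, rtcIsBM h₂.1 rt₂, rt₁, rt₂,
    isoTrans (isoSymm hBV₁.1 i₁) (isoTrans iso i₂)⟩

lemma conf {T T₁ T₂ : PreBM H} (h₁ : Red T T₁) (h₂ : Red T T₂) : Conf T₁ T₂ := by
  have hT : IsBM T := h₁.2.1
  rcases redInv h₁ with ⟨g, hg, i₁⟩ | ⟨g, hg, i₁⟩ | ⟨a, b, hg, i₁⟩ <;>
    rcases redInv h₂ with ⟨g', hg', i₂⟩ | ⟨g', hg', i₂⟩ | ⟨a', b', hg', i₂⟩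
  · exact confUp h₁ i₁ h₂ i₂ (confAA hT hg hg')
  · exact confUp h₁ i₁ h₂ i₂ (confAC hT hg hg')
  · exact confUp h₁ i₁ h₂ i₂ (confAP hT hg hg')
  · exact confUp h₁ i₁ h₂ i₂ (confSwap (confAC hT hg' hg))
  · exact confUp h₁ i₁ h₂ i₂ (confCC hT hg hg')
  · exact confUp h₁ i₁ h₂ i₂ (confCP hT hg hg')
  · exact confUp h₁ i₁ h₂ i₂ (confSwap (confAP hT hg' hg))
  · exact confUp h₁ i₁ h₂ i₂ (confSwap (confCP hT hg' hg))
  · exact confUp h₁ i₁ h₂ i₂ (confPP hT hg hg')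

theorem existsNF (T : PreBM H) (hT : IsBM T) :
    ∃ P, IsBM P ∧ Primitive P ∧ Relation.ReflTransGen Red T P := by
  by_cases hp : Primitive T
  · exact ⟨T, hT, hp, .refl⟩
  · have hstep : ∃ T₀, Red T T₀ ∧ IsBM T₀ := by
      by_cases h1 : ∃ g, Annihilating T g
      · obtain ⟨g, hg⟩ := h1; exact ⟨_, (redA hT hg).1, (redA hT hg).2⟩
      by_cases h2 : ∃ g, CoreElt T g
      · obtain ⟨g, hg⟩ := h2; exact ⟨_, (redC hT hg).1, (redC hT hg).2⟩
      by_cases h3 : ∃ g₁ g₂, ComplPair T g₁ g₂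
      · obtain ⟨g₁, g₂, hg⟩ := h3; exact ⟨_, (redP hT hg).1, (redP hT hg).2⟩
      exact absurd ⟨fun g hg => h1 ⟨g, hg⟩, fun g hg => h2 ⟨g, hg⟩,
        fun g₁ g₂ hg => h3 ⟨g₁, g₂, hg⟩⟩ hp
    obtain ⟨T₀, hr, hB₀⟩ := hstep
    have hcard := cardRed hr
    obtain ⟨P, p1, p2, p3⟩ := existsNF T₀ hB₀
    exact ⟨P, p1, p2, .head hr p3⟩
termination_by T.G.card
decreasing_by exact hcard

theorem newman : ∀ (n : ℕ) (T P P' : PreBM H), T.G.card ≤ n → IsBM T →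
    Primitive P → Primitive P' → Relation.ReflTransGen Red T P →
    Relation.ReflTransGen Red T P' → BMIso P P' := by
  intro n
  induction n with
  | zero =>
    intro T P P' hcard hT _ _ _ _
    have hempty : T.G = ∅ := Finset.card_eq_zero.mp (Nat.le_zero.mp hcard)
    exact absurd (hempty ▸ hT.1) (Finset.notMem_empty _)
  | succ n ih =>
    intro T P P' hcard hT hp hp' r r'
    rcases r.cases_head with rfl | ⟨T₁, h₁, r₁⟩
    · rcases r'.cases_head with rfl | ⟨T₂, h₂, r₂⟩
      · exact isoRefl _
      · exact (primNoRed hp h₂).elim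
    · rcases r'.cases_head with rfl | ⟨T₂, h₂, r₂⟩
      · exact (primNoRed hp' h₁).elim
      · obtain ⟨U₁, U₂, hBU₁, hBU₂, rt₁, rt₂, isoU⟩ := conf h₁ h₂
        obtain ⟨W₁, hBW₁, hpW₁, rW₁⟩ := existsNF U₁ hBU₁
        obtain ⟨W₂, rW₂, isoW⟩ := isoTransportRTC isoU hBU₂ rW₁
        have hpW₂ : Primitive W₂ := primIso hBW₁.1 isoW hpW₁
        have card₁ : T₁.G.card ≤ n := by have := cardRed h₁; omega
        have card₂ : T₂.G.card ≤ n := by have := cardRed h₂; omega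
        have i1 : BMIso P W₁ := ih T₁ P W₁ card₁ h₁.1 hp hpW₁ r₁ (rt₁.trans rW₁)
        have i2 : BMIso P' W₂ := ih T₂ P' W₂ card₂ h₂.1 hp' hpW₂ r₂ (rt₂.trans rW₂)
        have hBP' : IsBM P' := rtcIsBM h₂.1 r₂
        exact isoTrans i1 (isoTrans isoW (isoSymm hBP'.1 i2))

theorem homolKey {T T' : PreBM H} (h : Homologous T T') :
    (IsBM T ↔ IsBM T') ∧ (IsBM T → ∀ P P', Primitive P → Primitive P' →
      Relation.ReflTransGen Red T P → Relation.ReflTransGen Red T' P' → BMIso P P') := by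
  induction h with
  | rel T T' hr =>
    rcases hr with hstep | ⟨hBT, hBT', hiso⟩
    · refine ⟨⟨fun _ => hstep.2.1, fun _ => hstep.1⟩, ?_⟩
      intro hBT P P' hp hp' r r'
      exact newman T'.G.card T' P P' le_rfl hstep.2.1 hp hp'
        (Relation.ReflTransGen.head hstep r) r'
    · refine ⟨⟨fun _ => hBT', fun _ => hBT⟩, ?_⟩
      intro _ P P' hp hp' r r'
      obtain ⟨Q, rQ, isoPQ⟩ := isoTransportRTC hiso hBT' r
      have hBP : IsBM P := rtcIsBM hBT r
      have hpQ : Primitive Q := primIso hBP.1 isoPQ hp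
      exact isoTrans isoPQ (newman T'.G.card T' Q P' le_rfl hBT' hpQ hp' rQ r')
  | refl T =>
    exact ⟨Iff.rfl, fun hBT P P' hp hp' r r' =>
      newman T.G.card T P P' le_rfl hBT hp hp' r r'⟩
  | symm T T' _ ih =>
    refine ⟨ih.1.symm, fun hBT' P P' hp hp' r r' => ?_⟩
    have hBT : IsBM T := ih.1.mpr hBT'
    have i := ih.2 hBT P' P hp' hp r' r
    exact isoSymm (rtcIsBM hBT r').1 i
  | trans T T' T'' _ _ ih1 ih2 =>
    refine ⟨ih1.1.trans ih2.1, fun hBT P P'' hp hp'' r r'' => ?_⟩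
    have hBT' := ih1.1.mp hBT
    obtain ⟨Q, hBQ, hpQ, rQ⟩ := existsNF T' hBT'
    exact isoTrans (ih1.2 hBT P Q hp hpQ r rQ) (ih2.2 hBT' Q P'' hpQ hp'' rQ r'')

lemma rtcHomol {T P : PreBM H} (h : Relation.ReflTransGen Red T P) : Homologous P T := by
  induction h with
  | refl => exact Relation.EqvGen.refl T
  | tail _ hstep ih =>
    exact Relation.EqvGen.trans _ _ _ (Relation.EqvGen.rel _ _ (Or.inl hstep)) ih

lemma rtcSwap {T P : PreBM H} (h : Relation.ReflTransGen Red T P) :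
    Relation.ReflTransGen StepExt P T := by
  induction h with
  | refl => exact .refl
  | tail _ hstep ih => exact Relation.ReflTransGen.head hstep ih

end BMRed

/-- Every based matrix over an abelian group `H` is obtained
from a primitive based matrix by a finite sequence of elementary extensions,
and any two homologous primitive based matrices are isomorphic.  Consequently
each based matrix is homologous to a primitive based matrix, unique up to
isomorphism. -/
theorem primitive_reduction (H : Type*) [AddCommGroup H] :
    (∀ T : PreBM H, IsBM T →
      ∃ P : PreBM H, IsBM P ∧ Primitive P ∧ Relation.ReflTransGen StepExt P T) ∧
    (∀ P P' : PreBM H, IsBM P → IsBM P' → Primitive P → Primitive P' →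
      Homologous P P' → BMIso P P') ∧
    (∀ T : PreBM H, IsBM T →
      ∃ P : PreBM H, IsBM P ∧ Primitive P ∧ Homologous P T ∧
        ∀ P' : PreBM H, IsBM P' → Primitive P' → Homologous P' T → BMIso P P') := by
  refine ⟨?_, ?_, ?_⟩
  · intro T hT
    obtain ⟨P, h1, h2, h3⟩ := BMRed.existsNF T hT
    exact ⟨P, h1, h2, BMRed.rtcSwap h3⟩
  · intro P P' hP hP' hp hp' hh
    exact (BMRed.homolKey hh).2 hP P P' hp hp' .refl .refl
  · intro T hT
    obtain ⟨P, h1, h2, h3⟩ := BMRed.existsNF T hT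
    refine ⟨P, h1, h2, BMRed.rtcHomol h3, ?_⟩
    intro P' hP' hp' hh'
    have hPP' : Homologous P P' :=
      Relation.EqvGen.trans _ _ _ (BMRed.rtcHomol h3) (Relation.EqvGen.symm _ _ hh')
    exact (BMRed.homolKey hPP').2 h1 P P' h2 hp' .refl .refl
end

section
/- The genus σ(T) of a based matrix T over an integral domain R is a homology invariant: homologous based matrices have equal genus. -/
variable {H : Type*} [AddCommGroup H]

variable {R : Type*} [CommRing R] [IsDomain R]

/-- `b(X, Y) = ∑_{g ∈ X, h ∈ Y} b(g, h)` for subsets `X, Y` of the carrier. -/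
def bSet (T : PreBM R) (X Y : Finset ℕ) : R := ∑ g ∈ X, ∑ h ∈ Y, T.b g h

/-- A simple filling of `T = (G, s, b)`: a finite family of disjoint subsets
of `G`, each of cardinality at most `2`, whose union is `G` and one of which
is `{s}`. -/
def IsSimpleFilling (T : PreBM R) (P : Finset (Finset ℕ)) : Prop :=
  ({T.s} : Finset ℕ) ∈ P ∧ (∀ X ∈ P, X.card ≤ 2) ∧
    (∀ X ∈ P, ∀ Y ∈ P, X ≠ Y → Disjoint X Y) ∧ P.biUnion id = T.G

/-- Half the rank of the skew-symmetric matrix `(b(X_i, X_j))_{i,j}` of a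
simple filling. -/
noncomputable def sigmaFill (T : PreBM R) (P : Finset (Finset ℕ)) : ℕ :=
  (Matrix.of fun X Y : {A // A ∈ P} => bSet T X.1 Y.1).rank / 2

/-- The genus `σ(T)` of a based matrix: the minimum of `σ(𝒳)` over all simple
fillings `𝒳` of `T`. -/
noncomputable def bmGenus (T : PreBM R) : ℕ :=
  sInf {n : ℕ | ∃ P : Finset (Finset ℕ), IsSimpleFilling T P ∧ n = sigmaFill T P}

set_option linter.unusedSectionVars false

/-! ### Auxiliary lemmas about `bSet` -/

lemma bSet_congr' {T T' : PreBM R} {A B : Finset ℕ}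
    (h : ∀ x ∈ A, ∀ y ∈ B, T.b x y = T'.b x y) : bSet T A B = bSet T' A B :=
  Finset.sum_congr rfl fun x hx => Finset.sum_congr rfl fun y hy => h x hx y hy

lemma bSet_singleton_left (T : PreBM R) (g : ℕ) (B : Finset ℕ) :
    bSet T {g} B = ∑ h ∈ B, T.b g h := by simp [bSet]

lemma bSet_singleton_right (T : PreBM R) (A : Finset ℕ) (h : ℕ) :
    bSet T A {h} = ∑ x ∈ A, T.b x h := by simp [bSet]

lemma bSet_singleton_singleton (T : PreBM R) (g h : ℕ) :
    bSet T {g} {h} = T.b g h := by simp [bSet]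

lemma bSet_empty_left (T : PreBM R) (B : Finset ℕ) : bSet T ∅ B = 0 := by simp [bSet]

lemma bSet_insert_left (T : PreBM R) {g : ℕ} {A : Finset ℕ} (hg : g ∉ A) (B : Finset ℕ) :
    bSet T (insert g A) B = (∑ h ∈ B, T.b g h) + bSet T A B := Finset.sum_insert hg

lemma bSet_union_left (T : PreBM R) {A A' : Finset ℕ} (h : Disjoint A A') (B : Finset ℕ) :
    bSet T (A ∪ A') B = bSet T A B + bSet T A' B := Finset.sum_union h

lemma bSet_comm_sum (T : PreBM R) (A B : Finset ℕ) :
    bSet T A B = ∑ h ∈ B, ∑ x ∈ A, T.b x h := Finset.sum_comm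

lemma bSet_skew {T : PreBM R} (hT : IsBM T) {A B : Finset ℕ}
    (hA : A ⊆ T.G) (hB : B ⊆ T.G) : bSet T A B = -bSet T B A := by
  calc bSet T A B = ∑ x ∈ A, ∑ y ∈ B, -T.b y x :=
        Finset.sum_congr rfl fun x hx => Finset.sum_congr rfl fun y hy =>
          hT.2.1 x (hA hx) y (hB hy)
    _ = -∑ y ∈ B, ∑ x ∈ A, T.b y x := by rw [Finset.sum_comm]; simp
    _ = -bSet T B A := rfl

lemma bSet_self_zero {T : PreBM R} (hT : IsBM T) {A : Finset ℕ} (hA : A ⊆ T.G) :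
    bSet T A A = 0 := by
  unfold bSet
  rw [← Finset.sum_product']
  refine Finset.sum_involution (fun p _ => (p.2, p.1)) ?_ ?_ ?_ ?_
  · intro p hp
    have hp' := Finset.mem_product.mp hp
    have := hT.2.1 p.1 (hA hp'.1) p.2 (hA hp'.2)
    simp only [this]
    ring
  · intro p hp hne heq
    have hp' := Finset.mem_product.mp hp
    have h2 : p.2 = p.1 := congrArg Prod.fst heq
    apply hne
    rw [h2]
    exact hT.2.2 p.1 (hA hp'.1)
  · intro p hp
    have hp' := Finset.mem_product.mp hp
    exact Finset.mem_product.mpr ⟨hp'.2, hp'.1⟩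
  · intro p hp; rfl

/-! ### Rank comparison -/

lemma rank_le_congr {ι κ : Type*} [Fintype ι] [Fintype κ]
    (M : Matrix ι ι R) (M' : Matrix κ κ R) (B : Matrix ι κ R)
    (h : M = B * M' * B.transpose) : M.rank ≤ M'.rank :=
  h ▸ (Matrix.rank_mul_le_left _ _).trans (Matrix.rank_mul_le_right _ _)

lemma sum_ite_mem {P : Finset (Finset ℕ)} (v : {A // A ∈ P} → R) {c : Finset ℕ}
    (hc : c ∈ P) (a : R) :
    ∑ X : {A // A ∈ P}, v X * (if X.1 = c then a else 0) = v ⟨c, hc⟩ * a := by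
  rw [Fintype.sum_eq_single (⟨c, hc⟩ : {A // A ∈ P})]
  · simp
  · intro X hX
    rw [if_neg (fun h => hX (Subtype.ext h)), mul_zero]
/-! ### The main comparison lemma for `sigmaFill` -/

lemma sum_ite_mem' {P : Finset (Finset ℕ)} (v : {A // A ∈ P} → R) {c : Finset ℕ}
    (hc : c ∈ P) (a : R) :
    ∑ X : {A // A ∈ P}, (if X.1 = c then a else 0) * v X = a * v ⟨c, hc⟩ := by
  rw [Fintype.sum_eq_single (⟨c, hc⟩ : {A // A ∈ P})]
  · simp
  · intro X hX
    rw [if_neg (fun h => hX (Subtype.ext h)), zero_mul]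

lemma sigmaFill_le (T T' : PreBM R) (P P' : Finset (Finset ℕ))
    (c₁ c₂ c₃ : Finset ℕ → Finset ℕ) (α₁ α₂ α₃ : Finset ℕ → R)
    (hc₁ : ∀ X ∈ P, c₁ X ∈ P') (hc₂ : ∀ X ∈ P, c₂ X ∈ P') (hc₃ : ∀ X ∈ P, c₃ X ∈ P')
    (key : ∀ X ∈ P, ∀ Y ∈ P, bSet T X Y =
        α₁ X * α₁ Y * bSet T' (c₁ X) (c₁ Y) + α₁ X * α₂ Y * bSet T' (c₁ X) (c₂ Y) +
        α₁ X * α₃ Y * bSet T' (c₁ X) (c₃ Y) + α₂ X * α₁ Y * bSet T' (c₂ X) (c₁ Y) +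
        α₂ X * α₂ Y * bSet T' (c₂ X) (c₂ Y) + α₂ X * α₃ Y * bSet T' (c₂ X) (c₃ Y) +
        α₃ X * α₁ Y * bSet T' (c₃ X) (c₁ Y) + α₃ X * α₂ Y * bSet T' (c₃ X) (c₂ Y) +
        α₃ X * α₃ Y * bSet T' (c₃ X) (c₃ Y)) :
    sigmaFill T P ≤ sigmaFill T' P' := by
  unfold sigmaFill
  apply Nat.div_le_div_right
  set M' : Matrix {A // A ∈ P'} {A // A ∈ P'} R :=
    Matrix.of fun X Y : {A // A ∈ P'} => bSet T' X.1 Y.1 with hM'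
  set B : Matrix {A // A ∈ P} {A // A ∈ P'} R := fun X X' =>
    (if X'.1 = c₁ X.1 then α₁ X.1 else 0) + (if X'.1 = c₂ X.1 then α₂ X.1 else 0) +
    (if X'.1 = c₃ X.1 then α₃ X.1 else 0) with hB
  apply rank_le_congr _ _ B
  have hrow : ∀ (Y : {A // A ∈ P}) (X'' : {A // A ∈ P'}), (M' * B.transpose) X'' Y =
      M' X'' ⟨c₁ Y.1, hc₁ _ Y.2⟩ * α₁ Y.1 + M' X'' ⟨c₂ Y.1, hc₂ _ Y.2⟩ * α₂ Y.1 +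
      M' X'' ⟨c₃ Y.1, hc₃ _ Y.2⟩ * α₃ Y.1 := by
    intro Y X''
    simp only [Matrix.mul_apply, Matrix.transpose_apply]
    simp only [hB, mul_add,
      Finset.sum_add_distrib]
    rw [sum_ite_mem (fun Y' => M' X'' Y') (hc₁ _ Y.2),
      sum_ite_mem (fun Y' => M' X'' Y') (hc₂ _ Y.2),
      sum_ite_mem (fun Y' => M' X'' Y') (hc₃ _ Y.2)]
  ext X Y
  rw [Matrix.mul_assoc, Matrix.mul_apply]
  have hBapp : ∀ X'' : {A // A ∈ P'}, B X X'' * (M' * B.transpose) X'' Y =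
      ((if X''.1 = c₁ X.1 then α₁ X.1 else 0) * (M' * B.transpose) X'' Y +
       (if X''.1 = c₂ X.1 then α₂ X.1 else 0) * (M' * B.transpose) X'' Y) +
       (if X''.1 = c₃ X.1 then α₃ X.1 else 0) * (M' * B.transpose) X'' Y := by
    intro X''; rw [hB]; ring
  rw [Finset.sum_congr rfl fun X'' _ => hBapp X'']
  simp only [Finset.sum_add_distrib]
  rw [sum_ite_mem' (fun X'' => (M' * B.transpose) X'' Y) (hc₁ _ X.2),
    sum_ite_mem' (fun X'' => (M' * B.transpose) X'' Y) (hc₂ _ X.2),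
    sum_ite_mem' (fun X'' => (M' * B.transpose) X'' Y) (hc₃ _ X.2)]
  simp only [hrow Y]
  simp only [hM', Matrix.of_apply]
  rw [key X.1 X.2 Y.1 Y.2]
  ring
/-! ### Fillings: basic facts and the genus comparison principle -/

lemma block_subset {T : PreBM R} {P : Finset (Finset ℕ)} (hP : IsSimpleFilling T P)
    {X : Finset ℕ} (hX : X ∈ P) : X ⊆ T.G := by
  rw [← hP.2.2.2]
  exact Finset.subset_biUnion_of_mem id hX

lemma exists_filling (T : PreBM R) (hs : T.s ∈ T.G) : ∃ P, IsSimpleFilling T P := by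
  refine ⟨T.G.image (fun x => {x}), ?_, ?_, ?_, ?_⟩
  · exact Finset.mem_image.mpr ⟨T.s, hs, rfl⟩
  · intro X hX
    obtain ⟨x, -, rfl⟩ := Finset.mem_image.mp hX
    simp
  · intro X hX Y hY hne
    obtain ⟨x, -, rfl⟩ := Finset.mem_image.mp hX
    obtain ⟨y, -, rfl⟩ := Finset.mem_image.mp hY
    simp only [Finset.disjoint_singleton_left, Finset.mem_singleton]
    exact fun h => hne (by rw [h])
  · ext a
    simp

lemma bmGenus_le (T T' : PreBM R) (hs' : T'.s ∈ T'.G)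
    (h : ∀ P', IsSimpleFilling T' P' →
      ∃ P, IsSimpleFilling T P ∧ sigmaFill T P ≤ sigmaFill T' P') :
    bmGenus T ≤ bmGenus T' := by
  obtain ⟨P₀, hP₀⟩ := exists_filling T' hs'
  have hne : {n : ℕ | ∃ P', IsSimpleFilling T' P' ∧ n = sigmaFill T' P'}.Nonempty :=
    ⟨_, P₀, hP₀, rfl⟩
  obtain ⟨P', hP', hval⟩ := Nat.sInf_mem hne
  obtain ⟨P, hP, hle⟩ := h P' hP'
  calc bmGenus T ≤ sigmaFill T P := Nat.sInf_le ⟨P, hP, rfl⟩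
    _ ≤ sigmaFill T' P' := hle
    _ = bmGenus T' := hval.symm

lemma biUnion_erase_eq (P : Finset (Finset ℕ))
    (hdisj : ∀ X ∈ P, ∀ Y ∈ P, X ≠ Y → Disjoint X Y) {X₀ : Finset ℕ} (hX₀ : X₀ ∈ P) :
    (P.erase X₀).biUnion id = P.biUnion id \ X₀ := by
  ext a
  simp only [Finset.mem_biUnion, Finset.mem_erase, id, Finset.mem_sdiff]
  constructor
  · rintro ⟨Z, ⟨hZne, hZP⟩, haZ⟩
    refine ⟨⟨Z, hZP, haZ⟩, fun haX₀ => ?_⟩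
    exact (Finset.disjoint_left.mp (hdisj Z hZP X₀ hX₀ hZne) haZ) haX₀
  · rintro ⟨⟨Z, hZP, haZ⟩, haX₀⟩
    exact ⟨Z, ⟨fun h => haX₀ (h ▸ haZ), hZP⟩, haZ⟩
/-! ### Direction 1: an elementary extension does not increase the genus -/

lemma bmGenus_le_of_ext (T T' : PreBM R) (hT : IsBM T) (hT' : IsBM T')
    (hs : T'.s = T.s) (N : Finset ℕ) (hN2 : N.card ≤ 2) (hNne : N.Nonempty)
    (hNG : Disjoint N T.G) (hG' : T'.G = N ∪ T.G)
    (hagree : ∀ x ∈ T.G, ∀ y ∈ T.G, T'.b x y = T.b x y)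
    (ε : R) (hrow : ∀ h ∈ T'.G, (∑ x ∈ N, T'.b x h) = ε * T'.b T'.s h) :
    bmGenus T' ≤ bmGenus T := by
  have hGsub : T.G ⊆ T'.G := hG' ▸ Finset.subset_union_right
  have hNsub : N ⊆ T'.G := hG' ▸ Finset.subset_union_left
  apply bmGenus_le T' T hT.1
  intro P hP
  have hblk : ∀ Z ∈ P, Z ⊆ T.G := fun Z hZ => block_subset hP hZ
  refine ⟨insert N P, ?_, ?_⟩
  · refine ⟨?_, ?_, ?_, ?_⟩
    · rw [hs]; exact Finset.mem_insert_of_mem hP.1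
    · intro X hX
      rcases Finset.mem_insert.mp hX with hXN | hX'
      · exact hXN ▸ hN2
      · exact hP.2.1 X hX'
    · intro X hX Y hY hne
      rcases Finset.mem_insert.mp hX with hXN | hX'
      · rcases Finset.mem_insert.mp hY with hYN | hY'
        · exact absurd (hXN.trans hYN.symm) hne
        · exact hXN ▸ hNG.mono_right (hblk Y hY')
      · rcases Finset.mem_insert.mp hY with hYN | hY'
        · exact hYN ▸ (hNG.mono_right (hblk X hX')).symm
        · exact hP.2.2.1 X hX' Y hY' hne
    · rw [Finset.biUnion_insert, hP.2.2.2, hG']; rfl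
  · -- sigmaFill T' (insert N P) ≤ sigmaFill T P
    have hsP : ({T.s} : Finset ℕ) ∈ P := hP.1
    have hNrow : ∀ W, W ⊆ T.G → bSet T' N W = ε * bSet T {T.s} W := by
      intro W hW
      rw [bSet_comm_sum, bSet_singleton_left, Finset.mul_sum]
      refine Finset.sum_congr rfl fun h hh => ?_
      rw [hrow h (hGsub (hW hh)), hs]
      congr 1
      exact hagree T.s hT.1 h (hW hh)
    apply sigmaFill_le T' T (insert N P) P
      (c₁ := fun Z => if Z = N then ({T.s} : Finset ℕ) else Z)
      (c₂ := fun _ => ({T.s} : Finset ℕ)) (c₃ := fun _ => ({T.s} : Finset ℕ))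
      (α₁ := fun Z => if Z = N then ε else 1) (α₂ := fun _ => 0) (α₃ := fun _ => 0)
    · intro X hX
      by_cases hXN : X = N
      · simp only [hXN, if_pos rfl]; exact hsP
      · simp only [if_neg hXN]
        exact (Finset.mem_insert.mp hX).resolve_left hXN
    · intro X _; exact hsP
    · intro X _; exact hsP
    · intro Z hZ W hW
      by_cases hZN : Z = N <;> by_cases hWN : W = N
      · have h1 : bSet T' N N = 0 := bSet_self_zero hT' hNsub
        have h2 : bSet T ({T.s} : Finset ℕ) ({T.s} : Finset ℕ) = 0 := by
          rw [bSet_singleton_singleton]; exact hT.2.2 T.s hT.1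
        simp [hZN, hWN, h1, h2]
      · have hWP : W ∈ P := (Finset.mem_insert.mp hW).resolve_left hWN
        have h1 : bSet T' N W = ε * bSet T {T.s} W := hNrow W (hblk W hWP)
        simp [hZN, hWN, h1]
      · have hZP : Z ∈ P := (Finset.mem_insert.mp hZ).resolve_left hZN
        have h1 : bSet T' Z N = ε * bSet T Z {T.s} := by
          rw [bSet_skew hT' ((hblk Z hZP).trans hGsub) hNsub, hNrow Z (hblk Z hZP),
            bSet_skew hT (hblk Z hZP) (Finset.singleton_subset_iff.mpr hT.1)]
          ring
        simp [hZN, hWN, h1]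
      · have hZP : Z ∈ P := (Finset.mem_insert.mp hZ).resolve_left hZN
        have hWP : W ∈ P := (Finset.mem_insert.mp hW).resolve_left hWN
        have h1 : bSet T' Z W = bSet T Z W :=
          bSet_congr' fun x hx y hy => hagree x (hblk Z hZP hx) y (hblk W hWP hy)
        simp [hZN, hWN, h1]
/-! ### Direction 2 core: replacing blocks by a combination block -/

lemma sigmaFill_insert_le (T T' : PreBM R) (hT : IsBM T) (hT' : IsBM T')
    (hagree : ∀ x ∈ T.G, ∀ y ∈ T.G, T'.b x y = T.b x y)
    (hGsub : T.G ⊆ T'.G)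
    (P' Q : Finset (Finset ℕ)) (hQP' : Q ⊆ P') (hQG : ∀ Z ∈ Q, Z ⊆ T.G)
    (hP'G : ∀ Z ∈ P', Z ⊆ T'.G)
    (E : Finset ℕ) (hEG : E ⊆ T.G)
    (A₁ A₂ A₃ : Finset ℕ) (hA₁ : A₁ ∈ P') (hA₂ : A₂ ∈ P') (hA₃ : A₃ ∈ P')
    (a₁ a₂ a₃ : R)
    (hrowE : ∀ W, W ⊆ T'.G →
      a₁ * bSet T' A₁ W + a₂ * bSet T' A₂ W + a₃ * bSet T' A₃ W = bSet T' E W) :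
    sigmaFill T (insert E Q) ≤ sigmaFill T' P' := by
  have hEG' : E ⊆ T'.G := hEG.trans hGsub
  have hcolE : ∀ W, W ⊆ T'.G →
      a₁ * bSet T' W A₁ + a₂ * bSet T' W A₂ + a₃ * bSet T' W A₃ = bSet T' W E := by
    intro W hW
    rw [bSet_skew hT' hW (hP'G A₁ hA₁), bSet_skew hT' hW (hP'G A₂ hA₂),
      bSet_skew hT' hW (hP'G A₃ hA₃), bSet_skew hT' hW hEG', ← hrowE W hW]
    ring
  apply sigmaFill_le T T' (insert E Q) P'
    (c₁ := fun Z => if Z = E then A₁ else Z) (c₂ := fun _ => A₂) (c₃ := fun _ => A₃)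
    (α₁ := fun Z => if Z = E then a₁ else 1)
    (α₂ := fun Z => if Z = E then a₂ else 0)
    (α₃ := fun Z => if Z = E then a₃ else 0)
  · intro X hX
    by_cases hXE : X = E
    · simp only [hXE, if_pos rfl, eq_self_iff_true, if_true]; exact hA₁
    · simp only [if_neg hXE]
      exact hQP' ((Finset.mem_insert.mp hX).resolve_left hXE)
  · intro X _; exact hA₂
  · intro X _; exact hA₃
  · intro Z hZ W hW
    by_cases hZE : Z = E <;> by_cases hWE : W = E
    · have hzero : bSet T E E = 0 := bSet_self_zero hT hEG
      have hEE : bSet T' E E = 0 := bSet_self_zero hT' hEG'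
      have h₁ := hrowE A₁ (hP'G A₁ hA₁)
      have h₂ := hrowE A₂ (hP'G A₂ hA₂)
      have h₃ := hrowE A₃ (hP'G A₃ hA₃)
      have hcol := hcolE E hEG'
      simp only [hZE, hWE, if_pos rfl, eq_self_iff_true, if_true]
      linear_combination hzero - a₁ * h₁ - a₂ * h₂ - a₃ * h₃ - hcol - hEE
    · have hWQ : W ∈ Q := (Finset.mem_insert.mp hW).resolve_left hWE
      have hWG : W ⊆ T.G := hQG W hWQ
      have hEW : bSet T' E W = bSet T E W :=
        bSet_congr' fun x hx y hy => hagree x (hEG hx) y (hWG hy)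
      have hr := hrowE W (hWG.trans hGsub)
      simp only [hZE, if_pos rfl, eq_self_iff_true, if_true, if_neg hWE]
      linear_combination - hr - hEW
    · have hZQ : Z ∈ Q := (Finset.mem_insert.mp hZ).resolve_left hZE
      have hZG : Z ⊆ T.G := hQG Z hZQ
      have hZE' : bSet T' Z E = bSet T Z E :=
        bSet_congr' fun x hx y hy => hagree x (hZG hx) y (hEG hy)
      have hc := hcolE Z (hZG.trans hGsub)
      simp only [hWE, if_pos rfl, eq_self_iff_true, if_true, if_neg hZE]
      linear_combination - hc - hZE'
    · have hZQ : Z ∈ Q := (Finset.mem_insert.mp hZ).resolve_left hZE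
      have hWQ : W ∈ Q := (Finset.mem_insert.mp hW).resolve_left hWE
      have h1 : bSet T' Z W = bSet T Z W :=
        bSet_congr' fun x hx y hy => hagree x (hQG Z hZQ hx) y (hQG W hWQ hy)
      simp [hZE, hWE, h1]
/-! ### Direction 2 for `M₁`, `M₂` -/

lemma bmGenus_le_of_ext_single (T T' : PreBM R) (hT : IsBM T) (hT' : IsBM T')
    (hs : T'.s = T.s) (g : ℕ) (hg : g ∉ T.G) (hG' : T'.G = insert g T.G)
    (hagree : ∀ x ∈ T.G, ∀ y ∈ T.G, T'.b x y = T.b x y)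
    (ε : R) (hrowg : ∀ h ∈ T'.G, T'.b g h = ε * T'.b T'.s h) :
    bmGenus T ≤ bmGenus T' := by
  have hGsub : T.G ⊆ T'.G := hG' ▸ Finset.subset_insert g T.G
  apply bmGenus_le T T' hT'.1
  intro P' hP'
  have hgG' : g ∈ T'.G := hG' ▸ Finset.mem_insert_self g T.G
  obtain ⟨X₀, hX₀P, hgX₀⟩ :=
    Finset.mem_biUnion.mp (show g ∈ P'.biUnion id from hP'.2.2.2.symm ▸ hgG')
  replace hgX₀ : g ∈ X₀ := hgX₀
  have hP'G : ∀ Z ∈ P', Z ⊆ T'.G := fun Z hZ => block_subset hP' hZ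
  have hgs : g ≠ T'.s := fun h => hg (h ▸ hs ▸ (hs ▸ hT.1 : T'.s ∈ T.G))
  have hX₀s : X₀ ≠ ({T'.s} : Finset ℕ) := by
    intro h
    exact hgs (Finset.mem_singleton.mp (h ▸ hgX₀))
  have hsQ : ({T.s} : Finset ℕ) ∈ P'.erase X₀ := by
    refine Finset.mem_erase.mpr ⟨fun h => hX₀s (by rw [← h, hs]), ?_⟩
    rw [← hs]; exact hP'.1
  have hEG : X₀.erase g ⊆ T.G := by
    intro x hx
    have hx₀ := Finset.mem_erase.mp hx
    have : x ∈ insert g T.G := hG' ▸ hP'G X₀ hX₀P hx₀.2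
    exact (Finset.mem_insert.mp this).resolve_left hx₀.1
  have hQG : ∀ Z ∈ P'.erase X₀, Z ⊆ T.G := by
    intro Z hZ
    have hZe := Finset.mem_erase.mp hZ
    have hgZ : g ∉ Z :=
      Finset.disjoint_left.mp (hP'.2.2.1 X₀ hX₀P Z hZe.2 (Ne.symm hZe.1)) hgX₀
    intro x hx
    have : x ∈ insert g T.G := hG' ▸ hP'G Z hZe.2 hx
    exact (Finset.mem_insert.mp this).resolve_left (fun h => hgZ (h ▸ hx))
  refine ⟨insert (X₀.erase g) (P'.erase X₀), ⟨?_, ?_, ?_, ?_⟩, ?_⟩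
  · exact Finset.mem_insert_of_mem hsQ
  · intro X hX
    rcases Finset.mem_insert.mp hX with hXE | hXQ
    · exact hXE ▸ (Finset.card_erase_le.trans (hP'.2.1 X₀ hX₀P))
    · exact hP'.2.1 X (Finset.mem_erase.mp hXQ).2
  · intro X hX Y hY hne
    have hdisjE : ∀ Z ∈ P'.erase X₀, Disjoint (X₀.erase g) Z := by
      intro Z hZ
      have hZe := Finset.mem_erase.mp hZ
      exact (hP'.2.2.1 X₀ hX₀P Z hZe.2 (Ne.symm hZe.1)).mono_left (Finset.erase_subset g X₀)
    rcases Finset.mem_insert.mp hX with hXE | hXQ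
    · rcases Finset.mem_insert.mp hY with hYE | hYQ
      · exact absurd (hXE.trans hYE.symm) hne
      · exact hXE ▸ hdisjE Y hYQ
    · rcases Finset.mem_insert.mp hY with hYE | hYQ
      · exact hYE ▸ (hdisjE X hXQ).symm
      · exact hP'.2.2.1 X (Finset.mem_erase.mp hXQ).2 Y (Finset.mem_erase.mp hYQ).2 hne
  · rw [Finset.biUnion_insert, biUnion_erase_eq P' hP'.2.2.1 hX₀P, hP'.2.2.2]
    ext a
    simp only [Finset.mem_union, id_eq, Finset.mem_erase, Finset.mem_sdiff]
    constructor
    · rintro (⟨hag, haX₀⟩ | ⟨haG', haX₀⟩)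
      · exact hEG (Finset.mem_erase.mpr ⟨hag, haX₀⟩)
      · have : a ∈ insert g T.G := hG' ▸ haG'
        exact (Finset.mem_insert.mp this).resolve_left (fun h => haX₀ (h ▸ hgX₀))
    · intro haG
      have hag : a ≠ g := fun h => hg (h ▸ haG)
      by_cases haX₀ : a ∈ X₀
      · exact Or.inl ⟨hag, haX₀⟩
      · exact Or.inr ⟨hGsub haG, haX₀⟩
  · -- sigma inequality
    apply sigmaFill_insert_le T T' hT hT' hagree hGsub P' (P'.erase X₀)
      (Finset.erase_subset _ _) hQG hP'G (X₀.erase g) hEG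
      X₀ ({T'.s} : Finset ℕ) ({T'.s} : Finset ℕ) hX₀P hP'.1 hP'.1
      1 (-ε) 0
    intro W hW
    have hX₀E : insert g (X₀.erase g) = X₀ := Finset.insert_erase hgX₀
    have h1 : bSet T' X₀ W = (∑ h ∈ W, T'.b g h) + bSet T' (X₀.erase g) W := by
      conv_lhs => rw [← hX₀E]
      exact bSet_insert_left T' (Finset.notMem_erase g X₀) W
    rw [h1, bSet_singleton_left]
    have hsum : (∑ h ∈ W, T'.b g h) = ε * ∑ h ∈ W, T'.b T'.s h := by
      rw [Finset.mul_sum]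
      exact Finset.sum_congr rfl fun h hh => hrowg h (hW hh)
    linear_combination hsum
/-! ### Direction 2 for `M₃` -/

lemma bmGenus_le_of_ext3 (T T' : PreBM R) (hT : IsBM T) (hT' : IsBM T')
    (hs : T'.s = T.s) (g₁ g₂ : ℕ) (hg₁ : g₁ ∉ T.G) (hg₂ : g₂ ∉ T.G) (hg12 : g₁ ≠ g₂)
    (hG' : T'.G = insert g₁ (insert g₂ T.G))
    (hagree : ∀ x ∈ T.G, ∀ y ∈ T.G, T'.b x y = T.b x y)
    (hrow : ∀ h ∈ T'.G, T'.b g₁ h + T'.b g₂ h = T'.b T'.s h) :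
    bmGenus T ≤ bmGenus T' := by
  have hmemG : ∀ a, a ∈ T'.G ↔ a = g₁ ∨ a = g₂ ∨ a ∈ T.G := by
    intro a; rw [hG']; simp
  have hGsub : T.G ⊆ T'.G := fun x hx => (hmemG x).mpr (Or.inr (Or.inr hx))
  apply bmGenus_le T T' hT'.1
  intro P' hP'
  have hP'G : ∀ Z ∈ P', Z ⊆ T'.G := fun Z hZ => block_subset hP' hZ
  obtain ⟨X₁, hX₁P, hgX₁⟩ := Finset.mem_biUnion.mp
    (show g₁ ∈ P'.biUnion id from hP'.2.2.2.symm ▸ (hmemG g₁).mpr (Or.inl rfl))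
  obtain ⟨X₂, hX₂P, hgX₂⟩ := Finset.mem_biUnion.mp
    (show g₂ ∈ P'.biUnion id from hP'.2.2.2.symm ▸ (hmemG g₂).mpr (Or.inr (Or.inl rfl)))
  replace hgX₁ : g₁ ∈ X₁ := hgX₁
  replace hgX₂ : g₂ ∈ X₂ := hgX₂
  have hsG : T'.s ∈ T.G := hs ▸ hT.1
  have hg₁s : g₁ ≠ T'.s := fun h => hg₁ (h ▸ hsG)
  have hg₂s : g₂ ≠ T'.s := fun h => hg₂ (h ▸ hsG)
  have hsX₁ : X₁ ≠ ({T'.s} : Finset ℕ) := fun h => hg₁s (Finset.mem_singleton.mp (h ▸ hgX₁))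
  have hsX₂ : X₂ ≠ ({T'.s} : Finset ℕ) := fun h => hg₂s (Finset.mem_singleton.mp (h ▸ hgX₂))
  by_cases hcase : g₂ ∈ X₁
  · -- the pair lies in a single block `X₁ = {g₁, g₂}`
    have hX₁eq : X₁ = ({g₁, g₂} : Finset ℕ) := by
      refine (Finset.eq_of_subset_of_card_le ?_ ?_).symm
      · intro x hx
        rcases Finset.mem_insert.mp hx with rfl | hx
        · exact hgX₁
        · exact (Finset.mem_singleton.mp hx) ▸ hcase
      · rw [Finset.card_pair hg12]; exact hP'.2.1 X₁ hX₁P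
    have hQG : ∀ Z ∈ P'.erase X₁, Z ⊆ T.G := by
      intro Z hZ x hx
      have hZe := Finset.mem_erase.mp hZ
      have hdZ : Disjoint X₁ Z := hP'.2.2.1 X₁ hX₁P Z hZe.2 (Ne.symm hZe.1)
      rcases (hmemG x).mp (hP'G Z hZe.2 hx) with rfl | rfl | h
      · exact absurd hx (Finset.disjoint_left.mp hdZ hgX₁)
      · exact absurd hx (Finset.disjoint_left.mp hdZ hcase)
      · exact h
    have hsQ : ({T.s} : Finset ℕ) ∈ P'.erase X₁ :=
      Finset.mem_erase.mpr ⟨fun h => hsX₁ (by rw [← h, hs]), hs ▸ hP'.1⟩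
    refine ⟨insert ∅ (P'.erase X₁), ⟨Finset.mem_insert_of_mem hsQ, ?_, ?_, ?_⟩, ?_⟩
    · intro X hX
      rcases Finset.mem_insert.mp hX with hXE | hXQ
      · simp [hXE]
      · exact hP'.2.1 X (Finset.mem_erase.mp hXQ).2
    · intro X hX Y hY hne
      rcases Finset.mem_insert.mp hX with hXE | hXQ
      · rw [hXE]; exact Finset.disjoint_empty_left Y
      · rcases Finset.mem_insert.mp hY with hYE | hYQ
        · rw [hYE]; exact Finset.disjoint_empty_right X
        · exact hP'.2.2.1 X (Finset.mem_erase.mp hXQ).2 Y (Finset.mem_erase.mp hYQ).2 hne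
    · rw [Finset.biUnion_insert, biUnion_erase_eq P' hP'.2.2.1 hX₁P, hP'.2.2.2]
      ext a
      simp only [Finset.mem_union, id_eq, Finset.notMem_empty, false_or, Finset.mem_sdiff]
      constructor
      · rintro ⟨haG', haX₁⟩
        rcases (hmemG a).mp haG' with rfl | rfl | h
        · exact absurd hgX₁ haX₁
        · exact absurd hcase haX₁
        · exact h
      · intro haG
        refine ⟨hGsub haG, fun haX₁ => ?_⟩
        rw [hX₁eq] at haX₁
        rcases Finset.mem_insert.mp haX₁ with rfl | h
        · exact hg₁ haG
        · exact hg₂ ((Finset.mem_singleton.mp h) ▸ haG)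
    · apply sigmaFill_insert_le T T' hT hT' hagree hGsub P' (P'.erase X₁)
        (Finset.erase_subset _ _) hQG hP'G ∅ (Finset.empty_subset _)
        ({T'.s} : Finset ℕ) ({T'.s} : Finset ℕ) ({T'.s} : Finset ℕ) hP'.1 hP'.1 hP'.1
        0 0 0
      intro W hW
      rw [bSet_empty_left]; ring
  · -- `g₁` and `g₂` lie in distinct blocks
    have hX₁X₂ : X₁ ≠ X₂ := fun h => hcase (h ▸ hgX₂)
    have hdisj12 : Disjoint X₁ X₂ := hP'.2.2.1 X₁ hX₁P X₂ hX₂P hX₁X₂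
    have hg₁X₂ : g₁ ∉ X₂ := Finset.disjoint_left.mp hdisj12 hgX₁
    have hEG : (X₁.erase g₁ ∪ X₂.erase g₂) ⊆ T.G := by
      intro x hx
      rcases Finset.mem_union.mp hx with hx1 | hx2
      · have h1 := Finset.mem_erase.mp hx1
        rcases (hmemG x).mp (hP'G X₁ hX₁P h1.2) with rfl | rfl | h
        · exact absurd rfl h1.1
        · exact absurd h1.2 hcase
        · exact h
      · have h2 := Finset.mem_erase.mp hx2
        rcases (hmemG x).mp (hP'G X₂ hX₂P h2.2) with rfl | rfl | h
        · exact absurd h2.2 hg₁X₂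
        · exact absurd rfl h2.1
        · exact h
    have hQmem : ∀ Z ∈ (P'.erase X₁).erase X₂, Z ∈ P' ∧ Z ≠ X₁ ∧ Z ≠ X₂ := by
      intro Z hZ
      have h2 := Finset.mem_erase.mp hZ
      have h1 := Finset.mem_erase.mp h2.2
      exact ⟨h1.2, h1.1, h2.1⟩
    have hQG : ∀ Z ∈ (P'.erase X₁).erase X₂, Z ⊆ T.G := by
      intro Z hZ x hx
      obtain ⟨hZP, hZ1, hZ2⟩ := hQmem Z hZ
      rcases (hmemG x).mp (hP'G Z hZP hx) with rfl | rfl | h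
      · exact absurd hx (Finset.disjoint_left.mp (hP'.2.2.1 X₁ hX₁P Z hZP (Ne.symm hZ1)) hgX₁)
      · exact absurd hx (Finset.disjoint_left.mp (hP'.2.2.1 X₂ hX₂P Z hZP (Ne.symm hZ2)) hgX₂)
      · exact h
    have hsQ : ({T.s} : Finset ℕ) ∈ (P'.erase X₁).erase X₂ := by
      refine Finset.mem_erase.mpr ⟨fun h => hsX₂ (by rw [← h, hs]), ?_⟩
      exact Finset.mem_erase.mpr ⟨fun h => hsX₁ (by rw [← h, hs]), hs ▸ hP'.1⟩
    have hdisjE : ∀ Z ∈ (P'.erase X₁).erase X₂, Disjoint (X₁.erase g₁ ∪ X₂.erase g₂) Z := by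
      intro Z hZ
      obtain ⟨hZP, hZ1, hZ2⟩ := hQmem Z hZ
      refine Finset.disjoint_union_left.mpr ⟨?_, ?_⟩
      · exact (hP'.2.2.1 X₁ hX₁P Z hZP (Ne.symm hZ1)).mono_left (Finset.erase_subset g₁ X₁)
      · exact (hP'.2.2.1 X₂ hX₂P Z hZP (Ne.symm hZ2)).mono_left (Finset.erase_subset g₂ X₂)
    have hX₂e : X₂ ∈ P'.erase X₁ := Finset.mem_erase.mpr ⟨Ne.symm hX₁X₂, hX₂P⟩
    have hdisj' : ∀ X ∈ P'.erase X₁, ∀ Y ∈ P'.erase X₁, X ≠ Y → Disjoint X Y :=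
      fun X hX Y hY hne =>
        hP'.2.2.1 X (Finset.mem_erase.mp hX).2 Y (Finset.mem_erase.mp hY).2 hne
    refine ⟨insert (X₁.erase g₁ ∪ X₂.erase g₂) ((P'.erase X₁).erase X₂),
      ⟨Finset.mem_insert_of_mem hsQ, ?_, ?_, ?_⟩, ?_⟩
    · intro X hX
      rcases Finset.mem_insert.mp hX with hXE | hXQ
      · rw [hXE]
        calc (X₁.erase g₁ ∪ X₂.erase g₂).card ≤ (X₁.erase g₁).card + (X₂.erase g₂).card :=
              Finset.card_union_le _ _
          _ ≤ 2 := by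
              have h1 : (X₁.erase g₁).card = X₁.card - 1 := Finset.card_erase_of_mem hgX₁
              have h2 : (X₂.erase g₂).card = X₂.card - 1 := Finset.card_erase_of_mem hgX₂
              have h3 := hP'.2.1 X₁ hX₁P
              have h4 := hP'.2.1 X₂ hX₂P
              omega
      · exact hP'.2.1 X (hQmem X hXQ).1
    · intro X hX Y hY hne
      rcases Finset.mem_insert.mp hX with hXE | hXQ
      · rcases Finset.mem_insert.mp hY with hYE | hYQ
        · exact absurd (hXE.trans hYE.symm) hne
        · exact hXE ▸ hdisjE Y hYQ
      · rcases Finset.mem_insert.mp hY with hYE | hYQ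
        · exact hYE ▸ (hdisjE X hXQ).symm
        · exact hP'.2.2.1 X (hQmem X hXQ).1 Y (hQmem Y hYQ).1 hne
    · rw [Finset.biUnion_insert, biUnion_erase_eq (P'.erase X₁) hdisj' hX₂e,
        biUnion_erase_eq P' hP'.2.2.1 hX₁P, hP'.2.2.2]
      ext a
      simp only [Finset.mem_union, id_eq, Finset.mem_sdiff]
      constructor
      · rintro ((hE1 | hE2) | ⟨⟨haG', haX₁⟩, haX₂⟩)
        · exact hEG (Finset.mem_union_left _ hE1)
        · exact hEG (Finset.mem_union_right _ hE2)
        · rcases (hmemG a).mp haG' with rfl | rfl | h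
          · exact absurd hgX₁ haX₁
          · exact absurd hgX₂ haX₂
          · exact h
      · intro haG
        by_cases haX₁ : a ∈ X₁
        · exact Or.inl (Or.inl
            (Finset.mem_erase.mpr ⟨fun h => hg₁ (by rw [← h]; exact haG), haX₁⟩))
        · by_cases haX₂ : a ∈ X₂
          · exact Or.inl (Or.inr
              (Finset.mem_erase.mpr ⟨fun h => hg₂ (by rw [← h]; exact haG), haX₂⟩))
          · exact Or.inr ⟨⟨hGsub haG, haX₁⟩, haX₂⟩
    · apply sigmaFill_insert_le T T' hT hT' hagree hGsub P' ((P'.erase X₁).erase X₂)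
        ((Finset.erase_subset _ _).trans (Finset.erase_subset _ _)) hQG hP'G
        (X₁.erase g₁ ∪ X₂.erase g₂) hEG
        X₁ X₂ ({T'.s} : Finset ℕ) hX₁P hX₂P hP'.1 1 1 (-1)
      intro W hW
      have e₁ : bSet T' X₁ W = (∑ h ∈ W, T'.b g₁ h) + bSet T' (X₁.erase g₁) W := by
        conv_lhs => rw [← Finset.insert_erase hgX₁]
        exact bSet_insert_left T' (Finset.notMem_erase g₁ X₁) W
      have e₂ : bSet T' X₂ W = (∑ h ∈ W, T'.b g₂ h) + bSet T' (X₂.erase g₂) W := by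
        conv_lhs => rw [← Finset.insert_erase hgX₂]
        exact bSet_insert_left T' (Finset.notMem_erase g₂ X₂) W
      have e₃ : bSet T' (X₁.erase g₁ ∪ X₂.erase g₂) W
          = bSet T' (X₁.erase g₁) W + bSet T' (X₂.erase g₂) W :=
        bSet_union_left T' (hdisj12.mono (Finset.erase_subset g₁ X₁) (Finset.erase_subset g₂ X₂)) W
      have hsum : (∑ h ∈ W, T'.b g₁ h) + (∑ h ∈ W, T'.b g₂ h) = ∑ h ∈ W, T'.b T'.s h := by
        rw [← Finset.sum_add_distrib]
        exact Finset.sum_congr rfl fun h hh => hrow h (hW hh)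
      rw [e₁, e₂, e₃, bSet_singleton_left]
      linear_combination hsum
/-! ### Isomorphism invariance -/

lemma bmGenus_le_of_iso (T T' : PreBM R) (hT : IsBM T) (hT' : IsBM T')
    (f : ℕ → ℕ) (hbij : Set.BijOn f (T.G : Set ℕ) (T'.G : Set ℕ)) (hfs : f T.s = T'.s)
    (hfb : ∀ g ∈ T.G, ∀ h ∈ T.G, T'.b (f g) (f h) = T.b g h) :
    bmGenus T' ≤ bmGenus T := by
  apply bmGenus_le T' T hT.1
  intro P hP
  have hblk : ∀ Z ∈ P, Z ⊆ T.G := fun Z hZ => block_subset hP hZ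
  have hinj : Set.InjOn f (T.G : Set ℕ) := hbij.injOn
  set finv := Function.invFunOn f (T.G : Set ℕ) with hfinv
  have hinv : Set.InvOn finv f (T.G : Set ℕ) (T'.G : Set ℕ) := hbij.invOn_invFunOn
  have himginv : ∀ X : Finset ℕ, X ⊆ T.G → (X.image f).image finv = X := by
    intro X hX
    rw [Finset.image_image]
    have : X.image (finv ∘ f) = X.image id := by
      apply Finset.image_congr
      intro x hx
      exact hinv.1 (Finset.mem_coe.mpr (hX hx))
    rw [this, Finset.image_id]
  have hbSet_image : ∀ X : Finset ℕ, X ⊆ T.G → ∀ Y : Finset ℕ, Y ⊆ T.G →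
      bSet T' (X.image f) (Y.image f) = bSet T X Y := by
    intro X hX Y hY
    unfold bSet
    rw [Finset.sum_image (fun x hx y hy h => hinj (hX hx) (hX hy) h)]
    refine Finset.sum_congr rfl fun x hx => ?_
    rw [Finset.sum_image (fun a ha b hb h => hinj (hY ha) (hY hb) h)]
    exact Finset.sum_congr rfl fun y hy => hfb x (hX hx) y (hY hy)
  have hsmem' : ({T'.s} : Finset ℕ) ∈ P.image (fun X => X.image f) :=
    Finset.mem_image.mpr ⟨{T.s}, hP.1, by rw [Finset.image_singleton, hfs]⟩
  refine ⟨P.image (fun X => X.image f), ⟨hsmem', ?_, ?_, ?_⟩, ?_⟩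
  · intro X' hX'
    obtain ⟨X, hX, rfl⟩ := Finset.mem_image.mp hX'
    exact Finset.card_image_le.trans (hP.2.1 X hX)
  · intro X' hX' Y' hY' hne
    obtain ⟨X, hX, rfl⟩ := Finset.mem_image.mp hX'
    obtain ⟨Y, hY, rfl⟩ := Finset.mem_image.mp hY'
    have hXY : X ≠ Y := fun h => hne (by rw [h])
    have hd := hP.2.2.1 X hX Y hY hXY
    rw [Finset.disjoint_left]
    intro a haX haY
    obtain ⟨x, hx, rfl⟩ := Finset.mem_image.mp haX
    obtain ⟨y, hy, hxy⟩ := Finset.mem_image.mp haY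
    have : y = x := hinj (hblk Y hY hy) (hblk X hX hx) hxy
    exact (Finset.disjoint_left.mp hd hx) (this ▸ hy)
  · ext a
    simp only [Finset.mem_biUnion, Finset.mem_image, id_eq]
    constructor
    · rintro ⟨X', ⟨X, hX, rfl⟩, haX'⟩
      obtain ⟨x, hx, rfl⟩ := Finset.mem_image.mp haX'
      exact hbij.mapsTo (Finset.mem_coe.mpr (hblk X hX hx))
    · intro ha
      obtain ⟨x, hx, rfl⟩ := hbij.surjOn (Finset.mem_coe.mpr ha)
      have hxG : x ∈ T.G := Finset.mem_coe.mp hx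
      obtain ⟨X, hX, hxX⟩ := Finset.mem_biUnion.mp (hP.2.2.2.symm ▸ hxG)
      exact ⟨X.image f, ⟨X, hX, rfl⟩, Finset.mem_image_of_mem f hxX⟩
  · apply sigmaFill_le T' T (P.image (fun X => X.image f)) P
      (c₁ := fun Z => Z.image finv) (c₂ := fun _ => ({T.s} : Finset ℕ))
      (c₃ := fun _ => ({T.s} : Finset ℕ))
      (α₁ := fun _ => 1) (α₂ := fun _ => 0) (α₃ := fun _ => 0)
    · intro X' hX'
      obtain ⟨X, hX, rfl⟩ := Finset.mem_image.mp hX'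
      rw [himginv X (hblk X hX)]
      exact hX
    · intro X _; exact hP.1
    · intro X _; exact hP.1
    · intro Z hZ W hW
      obtain ⟨X, hX, rfl⟩ := Finset.mem_image.mp hZ
      obtain ⟨Y, hY, rfl⟩ := Finset.mem_image.mp hW
      rw [himginv X (hblk X hX), himginv Y (hblk Y hY),
        hbSet_image X (hblk X hX) Y (hblk Y hY)]
      ring

lemma bmIso_symm {T T' : PreBM R} (hT : IsBM T) (h : BMIso T T') : BMIso T' T := by
  obtain ⟨f, hbij, hfs, hfb⟩ := h
  have hinv : Set.InvOn (Function.invFunOn f (T.G : Set ℕ)) f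
      (T.G : Set ℕ) (T'.G : Set ℕ) := hbij.invOn_invFunOn
  have hbij' : Set.BijOn (Function.invFunOn f (T.G : Set ℕ))
      (T'.G : Set ℕ) (T.G : Set ℕ) := Set.BijOn.symm hinv.symm hbij
  refine ⟨_, hbij', ?_, ?_⟩
  · rw [← hfs]
    exact hinv.1 (Finset.mem_coe.mpr hT.1)
  · intro x hx y hy
    have hx' : Function.invFunOn f (T.G : Set ℕ) x ∈ T.G :=
      Finset.mem_coe.mp (hbij'.mapsTo (Finset.mem_coe.mpr hx))
    have hy' : Function.invFunOn f (T.G : Set ℕ) y ∈ T.G :=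
      Finset.mem_coe.mp (hbij'.mapsTo (Finset.mem_coe.mpr hy))
    have h2 := hfb _ hx' _ hy'
    rw [hinv.2 (Finset.mem_coe.mpr hx), hinv.2 (Finset.mem_coe.mpr hy)] at h2
    exact h2.symm
/-! ### One homology step preserves the genus -/

lemma bmGenus_step {A B : PreBM R}
    (h : StepExt A B ∨ (IsBM A ∧ IsBM B ∧ BMIso A B)) : bmGenus A = bmGenus B := by
  rcases h with ⟨hA, hB, hext⟩ | ⟨hA, hB, hiso⟩
  · rcases hext with h1 | h2 | h3
    · obtain ⟨hs, g, hg, hG', hagree, hzero⟩ := h1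
      refine le_antisymm ?_ ?_
      · exact bmGenus_le_of_ext_single A B hA hB hs g hg hG' hagree 0
          (fun h hh => by rw [hzero h hh, zero_mul])
      · refine bmGenus_le_of_ext A B hA hB hs {g} (by simp) ⟨g, Finset.mem_singleton_self g⟩
          (Finset.disjoint_singleton_left.mpr hg) (by rw [hG']; ext a; simp)
          hagree 0 (fun h hh => ?_)
        rw [Finset.sum_singleton, hzero h hh, zero_mul]
    · obtain ⟨hs, g, hg, hG', hagree, hcore⟩ := h2
      refine le_antisymm ?_ ?_
      · exact bmGenus_le_of_ext_single A B hA hB hs g hg hG' hagree 1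
          (fun h hh => by rw [hcore h hh, one_mul])
      · refine bmGenus_le_of_ext A B hA hB hs {g} (by simp) ⟨g, Finset.mem_singleton_self g⟩
          (Finset.disjoint_singleton_left.mpr hg) (by rw [hG']; ext a; simp)
          hagree 1 (fun h hh => ?_)
        rw [Finset.sum_singleton, hcore h hh, one_mul]
    · obtain ⟨hs, g₁, g₂, hg₁, hg₂, hg12, hG', hagree, hcompl⟩ := h3
      have hNG : Disjoint ({g₁, g₂} : Finset ℕ) A.G := by
        rw [Finset.disjoint_left]
        intro a ha
        rcases Finset.mem_insert.mp ha with rfl | ha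
        · exact hg₁
        · exact (Finset.mem_singleton.mp ha) ▸ hg₂
      have hG'' : B.G = ({g₁, g₂} : Finset ℕ) ∪ A.G := by
        rw [hG']
        ext a; simp [or_assoc]
      refine le_antisymm ?_ ?_
      · exact bmGenus_le_of_ext3 A B hA hB hs g₁ g₂ hg₁ hg₂ hg12 hG' hagree hcompl
      · refine bmGenus_le_of_ext A B hA hB hs {g₁, g₂}
          (by rw [Finset.card_pair hg12]) ⟨g₁, Finset.mem_insert_self g₁ {g₂}⟩
          hNG hG'' hagree 1 (fun h hh => ?_)
        rw [Finset.sum_pair hg12, hcompl h hh, one_mul]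
  · exact le_antisymm (bmGenus_le_of_iso B A hB hA _ (bmIso_symm hA hiso).choose_spec.1
      (bmIso_symm hA hiso).choose_spec.2.1 (bmIso_symm hA hiso).choose_spec.2.2)
      (by obtain ⟨f, h1, h2, h3⟩ := hiso; exact bmGenus_le_of_iso A B hA hB f h1 h2 h3)
/-- The genus of a based matrix over an integral domain is
a homology invariant: homologous based matrices have equal genus. -/
theorem bmGenus_homology_invariant {R : Type*} [CommRing R] [IsDomain R]
    (T T' : PreBM R) (hT : IsBM T) (hT' : IsBM T')
    (h : Homologous T T') : bmGenus T = bmGenus T' := by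
  clear hT hT'
  induction h with
  | rel A B hAB => exact bmGenus_step hAB
  | refl A => rfl
  | symm A B _ ih => exact ih.symm
  | trans A B C _ _ ih1 ih2 => exact ih1.trans ih2
end
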